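/- arXiv:1709.02938 — 6 statements merged into one kernel-verified Lean document; each statement's English description precedes it below -/
import Mathlib

section
/- For any n ≥ 1 and digits q_1, …, q_n ∈ {0,1,2,3}, the composition applied to the origin satisfies (T_{q_1} ∘ T_{q_2} ∘ ⋯ ∘ T_{q_n})((0,0)) = Σ_{j=1}^n 2^{−j} · H_0^{e_{0j}} · H_3^{e_{3j}} · h_{q_j}, where e_{0j} = (number of indices i < j with q_i = 0) mod 2 and e_{3j} = (number of indices i < j with q_i = 3) mod 2. -/
open Matrix

noncomputable section

abbrev E2 := EuclideanSpace ℝ (Fin 2)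

def toE (v : Fin 2 → ℝ) : E2 := WithLp.toLp 2 v

def pt (x y : ℝ) : E2 := WithLp.toLp 2 ![x, y]

def Hm : Fin 4 → Matrix (Fin 2) (Fin 2) ℝ
  | 0 => !![0, 1; 1, 0]
  | 1 => 1
  | 2 => 1
  | 3 => !![0, -1; -1, 0]

def hv : Fin 4 → E2
  | 0 => pt 0 0
  | 1 => pt 0 1
  | 2 => pt 1 1
  | 3 => pt 2 1

def T (i : Fin 4) (v : E2) : E2 :=
  (1 / 2 : ℝ) • toE ((Hm i).mulVec v) + (1 / 2 : ℝ) • hv i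

def Q : Set E2 := {p | p 0 ∈ Set.Icc (0:ℝ) 1 ∧ p 1 ∈ Set.Icc (0:ℝ) 1}

def Fv : Fin 4 → E2
  | 0 => pt (1/4) (1/4)
  | 1 => pt (1/4) (3/4)
  | 2 => pt (3/4) (3/4)
  | 3 => pt (3/4) (1/4)

/-- Composition T_{q 0} ∘ ⋯ ∘ T_{q (n-1)}. -/
def compT : (n : ℕ) → (Fin n → Fin 4) → E2 → E2
  | 0, _ => id
  | n + 1, q => T (q 0) ∘ compT n (fun j => q j.succ)

/-- Node from m+1 digits q 0, …, q m : (T_{q 0} ∘ ⋯ ∘ T_{q (m-1)}) (F_{q m}). -/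
def nodeAux : ℕ → (ℕ → Fin 4) → E2
  | 0, q => Fv (q 0)
  | m + 1, q => T (q 0) (nodeAux m (fun j => q (j + 1)))

/-- j-th base-4 digit of k, for the n-digit expansion (j = 0 is the leading digit). -/
def hdigit (n k j : ℕ) : Fin 4 := ⟨k / 4 ^ (n - 1 - j) % 4, Nat.mod_lt _ (by norm_num)⟩

/-- The k-th node of the n-th order Hilbert curve. -/
def node (n k : ℕ) : E2 := nodeAux (n - 1) (hdigit n k)

/-! ### Auxiliary lemmas -/

lemma H00 : Hm 0 * Hm 0 = 1 := by
  show !![(0:ℝ), 1; 1, 0] * !![0, 1; 1, 0] = 1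
  ext i j
  fin_cases i <;> fin_cases j <;>
    simp [Matrix.mul_apply, Fin.sum_univ_two, Matrix.one_apply]

lemma H33 : Hm 3 * Hm 3 = 1 := by
  show !![(0:ℝ), -1; -1, 0] * !![0, -1; -1, 0] = 1
  ext i j
  fin_cases i <;> fin_cases j <;>
    simp [Matrix.mul_apply, Fin.sum_univ_two, Matrix.one_apply]

lemma H03 : Hm 0 * Hm 3 = Hm 3 * Hm 0 := by
  show !![(0:ℝ), 1; 1, 0] * !![0, -1; -1, 0] = !![0, -1; -1, 0] * !![0, 1; 1, 0]
  ext i j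
  fin_cases i <;> fin_cases j <;> simp [Matrix.mul_apply, Fin.sum_univ_two]

lemma Hm_mul (i : Fin 4) (a b : ℕ) :
    Hm i * (Hm 0 ^ (a % 2) * Hm 3 ^ (b % 2)) =
      Hm 0 ^ ((a + if i = 0 then 1 else 0) % 2) *
      Hm 3 ^ ((b + if i = 3 then 1 else 0) % 2) := by
  have hi : i = 0 ∨ i = 1 ∨ i = 2 ∨ i = 3 := by omega
  rcases hi with rfl | rfl | rfl | rfl
  · rw [if_pos rfl, if_neg (by decide), add_zero]
    rcases Nat.mod_two_eq_zero_or_one a with ha | ha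
    · rw [ha, show (a+1) % 2 = 1 by omega, pow_zero, one_mul, pow_one]
    · rw [ha, show (a+1) % 2 = 0 by omega, pow_one, pow_zero, one_mul,
        ← mul_assoc, H00, one_mul]
  · rw [if_neg (by decide), if_neg (by decide), add_zero, add_zero,
      show Hm 1 = 1 from rfl, one_mul]
  · rw [if_neg (by decide), if_neg (by decide), add_zero, add_zero,
      show Hm 2 = 1 from rfl, one_mul]
  · rw [if_neg (by decide), if_pos rfl, add_zero]
    rcases Nat.mod_two_eq_zero_or_one a with ha | ha <;>
      rcases Nat.mod_two_eq_zero_or_one b with hb | hb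
    · rw [ha, hb, show (b+1) % 2 = 1 by omega, pow_zero, pow_zero, pow_one,
        one_mul, mul_one, one_mul]
    · rw [ha, hb, show (b+1) % 2 = 0 by omega, pow_zero, pow_zero, pow_one,
        one_mul, one_mul, H33]
    · rw [ha, hb, show (b+1) % 2 = 1 by omega, pow_one, pow_one, pow_zero,
        mul_one, H03]
    · rw [ha, hb, show (b+1) % 2 = 0 by omega, pow_one, pow_one, pow_zero,
        mul_one, ← mul_assoc, ← H03, mul_assoc, H33, mul_one]

lemma card_zero' (n : ℕ) (q : Fin (n+1) → Fin 4) (c : Fin 4) :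
    (Finset.univ.filter fun i : Fin (n+1) => i < 0 ∧ q i = c).card = 0 := by
  simp [Finset.filter_eq_empty_iff]

lemma card_succ' (n : ℕ) (q : Fin (n+1) → Fin 4) (j : Fin n) (c : Fin 4) :
    (Finset.univ.filter fun i : Fin (n+1) => i < j.succ ∧ q i = c).card
      = (Finset.univ.filter fun i : Fin n => i < j ∧ q i.succ = c).card
        + (if q 0 = c then 1 else 0) := by
  rw [Finset.card_filter, Finset.card_filter, Fin.sum_univ_succ]
  simp only [Fin.succ_lt_succ_iff, Fin.succ_pos, true_and]
  rw [add_comm]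

lemma toE_mulVec_sum (A : Matrix (Fin 2) (Fin 2) ℝ) {ι : Type*} (s : Finset ι) (f : ι → E2) :
    toE (A.mulVec (WithLp.ofLp (∑ j ∈ s, f j))) = ∑ j ∈ s, toE (A.mulVec (f j)) := by
  induction s using Finset.cons_induction with
  | empty => simp [toE]
  | cons a s h ih =>
      rw [Finset.sum_cons, Finset.sum_cons, ← ih]
      simp only [toE, WithLp.ofLp_add, Matrix.mulVec_add, WithLp.toLp_add]

lemma toE_step (A M : Matrix (Fin 2) (Fin 2) ℝ) (c : ℝ) (v : E2) :
    toE (A.mulVec (WithLp.ofLp (c • toE (M.mulVec v)))) = c • toE ((A * M).mulVec v) :=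
  by simp only [toE, WithLp.ofLp_smul, WithLp.ofLp_toLp, Matrix.mulVec_smul, Matrix.mulVec_mulVec, WithLp.toLp_smul]

@[simp] lemma toE_id (v : E2) : toE v = v := by simp [toE]

lemma compT_key (n : ℕ) (q : Fin n → Fin 4) :
    compT n q 0 =
      ∑ j : Fin n, ((1:ℝ) / 2 ^ ((j : ℕ) + 1)) •
        toE ((Hm 0 ^ ((Finset.univ.filter fun i : Fin n => i < j ∧ q i = 0).card % 2) *
              Hm 3 ^ ((Finset.univ.filter fun i : Fin n => i < j ∧ q i = 3).card % 2)).mulVec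
              (hv (q j))) := by
  induction n with
  | zero => simp [compT]
  | succ n ih =>
    have step : compT (n+1) q 0 = T (q 0) (compT n (fun j => q j.succ) 0) := rfl
    rw [step, ih (fun j => q j.succ), Fin.sum_univ_succ, T]
    rw [toE_mulVec_sum]
    simp only [toE_step, Finset.smul_sum, smul_smul, Hm_mul]
    rw [add_comm]
    congr 1
    · rw [card_zero', card_zero']
      simp only [Nat.zero_mod, pow_zero, one_mul, Matrix.one_mulVec, toE_id]
      norm_num
    · refine Finset.sum_congr rfl fun j _ => ?_
      rw [card_succ' n q j 0, card_succ' n q j 3]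
      congr 1
      · rw [Fin.val_succ, pow_succ, pow_succ]
        field_simp
        ring

/-- the composition applied to the origin equals
Σ_{j=1}^n 2^{−j} · H_0^{e_{0j}} · H_3^{e_{3j}} · h_{q_j}. -/
theorem compT_apply_origin (n : ℕ) (hn : 1 ≤ n) (q : Fin n → Fin 4) :
    compT n q 0 =
      ∑ j : Fin n, ((1:ℝ) / 2 ^ ((j : ℕ) + 1)) •
        toE ((Hm 0 ^ ((Finset.univ.filter fun i : Fin n => i < j ∧ q i = 0).card % 2) *
              Hm 3 ^ ((Finset.univ.filter fun i : Fin n => i < j ∧ q i = 3).card % 2)).mulVec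
              (hv (q j))) := compT_key n q

end
end

section
/- There exists a continuous surjective map f : [0,1] → [0,1]×[0,1] (Hilbert's space-filling curve) such that for every n ≥ 1 and every integer 0 ≤ k < 4^n with base-4 digits q_1, …, q_n (i.e. k = Σ_{j=1}^n q_j·4^{n−j}), f maps the interval [k/4^n, (k+1)/4^n] into the sub-square (T_{q_1} ∘ ⋯ ∘ T_{q_n})(Q). -/
open Matrix

noncomputable section

noncomputable section
-- component formulas
lemma pt_0 (x y : ℝ) : pt x y 0 = x := rfl
lemma pt_1 (x y : ℝ) : pt x y 1 = y := rfl

lemma T0_apply (v : E2) : T 0 v = pt (v 1 / 2) (v 0 / 2) := by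
  ext j
  fin_cases j <;>
    simp [T, Hm, hv, pt, toE, Matrix.mulVec, dotProduct, Fin.sum_univ_two,
      PiLp.add_apply, PiLp.smul_apply, smul_eq_mul] <;> ring

lemma T1_apply (v : E2) : T 1 v = pt (v 0 / 2) (v 1 / 2 + 1/2) := by
  ext j
  fin_cases j <;>
    simp [T, Hm, hv, pt, toE, Matrix.mulVec, dotProduct, Fin.sum_univ_two,
      PiLp.add_apply, PiLp.smul_apply, smul_eq_mul] <;> ring

lemma T2_apply (v : E2) : T 2 v = pt (v 0 / 2 + 1/2) (v 1 / 2 + 1/2) := by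
  ext j
  fin_cases j <;>
    simp [T, Hm, hv, pt, toE, Matrix.mulVec, dotProduct, Fin.sum_univ_two,
      PiLp.add_apply, PiLp.smul_apply, smul_eq_mul] <;> ring

lemma T3_apply (v : E2) : T 3 v = pt (1 - v 1 / 2) (1/2 - v 0 / 2) := by
  ext j
  fin_cases j <;>
    simp [T, Hm, hv, pt, toE, Matrix.mulVec, dotProduct, Fin.sum_univ_two,
      PiLp.add_apply, PiLp.smul_apply, smul_eq_mul] <;> ring

lemma mem_Q_iff (x y : ℝ) : pt x y ∈ Q ↔ (0 ≤ x ∧ x ≤ 1) ∧ (0 ≤ y ∧ y ≤ 1) := by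
  simp [Q, pt, Set.mem_Icc, and_assoc]

end
noncomputable section
lemma E2_eta (v : E2) : v = pt (v 0) (v 1) := by
  ext j; fin_cases j <;> rfl

lemma dist_E2 (u v : E2) :
    dist u v = Real.sqrt ((u 0 - v 0)^2 + (u 1 - v 1)^2) := by
  rw [EuclideanSpace.dist_eq, Fin.sum_univ_two]
  simp [Real.dist_eq, sq_abs]

lemma sqrt_four : Real.sqrt 4 = 2 := by
  rw [show (4:ℝ) = 2^2 by norm_num, Real.sqrt_sq (by norm_num)]

lemma T_lip (i : Fin 4) (u v : E2) : dist (T i u) (T i v) = dist u v / 2 := by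
  fin_cases i
  · show dist (T 0 u) (T 0 v) = _
    rw [T0_apply, T0_apply, dist_E2, dist_E2]
    rw [show (pt (u 1 / 2) (u 0 / 2) 0 - pt (v 1 / 2) (v 0 / 2) 0)^2
        + (pt (u 1 / 2) (u 0 / 2) 1 - pt (v 1 / 2) (v 0 / 2) 1)^2
        = ((u 0 - v 0)^2 + (u 1 - v 1)^2) / 4 by simp [pt_0, pt_1]; ring]
    rw [Real.sqrt_div (by positivity), sqrt_four]
  · show dist (T 1 u) (T 1 v) = _
    rw [T1_apply, T1_apply, dist_E2, dist_E2]
    rw [show (pt (u 0 / 2) (u 1 / 2 + 1/2) 0 - pt (v 0 / 2) (v 1 / 2 + 1/2) 0)^2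
        + (pt (u 0 / 2) (u 1 / 2 + 1/2) 1 - pt (v 0 / 2) (v 1 / 2 + 1/2) 1)^2
        = ((u 0 - v 0)^2 + (u 1 - v 1)^2) / 4 by simp [pt_0, pt_1]; ring]
    rw [Real.sqrt_div (by positivity), sqrt_four]
  · show dist (T 2 u) (T 2 v) = _
    rw [T2_apply, T2_apply, dist_E2, dist_E2]
    rw [show (pt (u 0 / 2 + 1/2) (u 1 / 2 + 1/2) 0 - pt (v 0 / 2 + 1/2) (v 1 / 2 + 1/2) 0)^2
        + (pt (u 0 / 2 + 1/2) (u 1 / 2 + 1/2) 1 - pt (v 0 / 2 + 1/2) (v 1 / 2 + 1/2) 1)^2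
        = ((u 0 - v 0)^2 + (u 1 - v 1)^2) / 4 by simp [pt_0, pt_1]; ring]
    rw [Real.sqrt_div (by positivity), sqrt_four]
  · show dist (T 3 u) (T 3 v) = _
    rw [T3_apply, T3_apply, dist_E2, dist_E2]
    rw [show (pt (1 - u 1 / 2) (1/2 - u 0 / 2) 0 - pt (1 - v 1 / 2) (1/2 - v 0 / 2) 0)^2
        + (pt (1 - u 1 / 2) (1/2 - u 0 / 2) 1 - pt (1 - v 1 / 2) (1/2 - v 0 / 2) 1)^2
        = ((u 0 - v 0)^2 + (u 1 - v 1)^2) / 4 by simp [pt_0, pt_1]; ring]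
    rw [Real.sqrt_div (by positivity), sqrt_four]

lemma T_mapsQ (i : Fin 4) : Set.MapsTo (T i) Q Q := by
  intro v hv
  rw [E2_eta v, mem_Q_iff] at hv
  obtain ⟨⟨h1, h2⟩, h3, h4⟩ := hv
  fin_cases i
  · show T 0 v ∈ Q
    rw [T0_apply, mem_Q_iff]; constructor <;> constructor <;> linarith
  · show T 1 v ∈ Q
    rw [T1_apply, mem_Q_iff]; constructor <;> constructor <;> linarith
  · show T 2 v ∈ Q
    rw [T2_apply, mem_Q_iff]; constructor <;> constructor <;> linarith
  · show T 3 v ∈ Q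
    rw [T3_apply, mem_Q_iff]; constructor <;> constructor <;> linarith

lemma diam_Q (u v : E2) (hu : u ∈ Q) (hv : v ∈ Q) : dist u v ≤ 2 := by
  obtain ⟨⟨h1, h2⟩, h3, h4⟩ := hu
  obtain ⟨⟨h5, h6⟩, h7, h8⟩ := hv
  rw [dist_E2]
  calc Real.sqrt ((u 0 - v 0)^2 + (u 1 - v 1)^2) ≤ Real.sqrt 4 := by
        apply Real.sqrt_le_sqrt; nlinarith
    _ = 2 := sqrt_four
end
noncomputable section
def cT : ℕ → (ℕ → Fin 4) → E2 → E2
  | 0, _, v => v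
  | n + 1, q, v => T (q 0) (cT n (fun j => q (j + 1)) v)

lemma cT_congr : ∀ n (q q' : ℕ → Fin 4), (∀ j < n, q j = q' j) → ∀ v, cT n q v = cT n q' v := by
  intro n
  induction n with
  | zero => intro q q' h v; rfl
  | succ n ih =>
    intro q q' h v
    show T (q 0) _ = T (q' 0) _
    rw [h 0 (by omega), ih (fun j => q (j+1)) (fun j => q' (j+1)) (fun j hj => h (j+1) (by omega)) v]

lemma compT_eq_cT : ∀ n (q : Fin n → Fin 4) (r : ℕ → Fin 4),
    (∀ j : Fin n, r j = q j) → ∀ v, compT n q v = cT n r v := by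
  intro n
  induction n with
  | zero => intro q r h v; rfl
  | succ n ih =>
    intro q r h v
    show T (q 0) (compT n (fun j => q j.succ) v) = T (r 0) _
    have h0 : r 0 = q 0 := h 0
    rw [h0, ih (fun j => q j.succ) (fun j => r (j+1)) (fun j => h j.succ) v]

lemma cT_split : ∀ n m (q : ℕ → Fin 4) v,
    cT (n + m) q v = cT m q (cT n (fun j => q (m + j)) v) := by
  intro n m
  induction m generalizing n with
  | zero => intro q v; simp [cT]
  | succ m ih =>
    intro q v
    rw [show n + (m + 1) = (n + m) + 1 from rfl]
    show T (q 0) (cT (n+m) (fun j => q (j+1)) v) = T (q 0) (cT m (fun j => q (j+1)) (cT n (fun j => q (m+1+j)) v))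
    rw [ih n (fun j => q (j+1)) v,
      cT_congr n (fun j => q (m+j+1)) (fun j => q (m+1+j)) (fun j _ => congrArg q (by omega)) v]

lemma cT_lip : ∀ n (q : ℕ → Fin 4) u v, dist (cT n q u) (cT n q v) = dist u v / 2 ^ n := by
  intro n
  induction n with
  | zero => intro q u v; simp [cT]
  | succ n ih =>
    intro q u v
    show dist (T (q 0) _) (T (q 0) _) = _
    rw [T_lip, ih]
    ring

lemma cT_maps (n : ℕ) (q : ℕ → Fin 4) : Set.MapsTo (cT n q) Q Q := by
  induction n generalizing q with
  | zero => intro v hv; exact hv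
  | succ n ih => intro v hv; exact T_mapsQ (q 0) (ih _ hv)

lemma cT_cont (n : ℕ) (q : ℕ → Fin 4) : Continuous (cT n q) := by
  apply LipschitzWith.continuous (K := 1)
  apply LipschitzWith.of_dist_le_mul
  intro u v
  rw [cT_lip]
  have : (0:ℝ) < 2 ^ n := by positivity
  have h2 : (1:ℝ) ≤ 2 ^ n := by exact_mod_cast Nat.one_le_two_pow (n := n)
  calc dist u v / 2 ^ n ≤ dist u v / 1 := by
        apply div_le_div_of_nonneg_left dist_nonneg (by norm_num) h2
    _ = 1 * dist u v := by ring
end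
noncomputable section

def S4 (n : ℕ) (q : Fin n → Fin 4) : ℕ := ∑ j : Fin n, (q j : ℕ) * 4 ^ (n - 1 - (j : ℕ))

lemma S4_split (n : ℕ) (q : Fin (n+1) → Fin 4) :
    S4 (n+1) q = (q 0 : ℕ) * 4 ^ n + S4 n (fun j => q j.succ) := by
  unfold S4
  rw [Fin.sum_univ_succ]
  congr 1
  apply Finset.sum_congr rfl
  intro j _
  congr 2
  simp only [Fin.val_succ]
  omega

lemma S4_lt (n : ℕ) (q : Fin n → Fin 4) : S4 n q < 4 ^ n := by
  induction n with
  | zero => simp [S4]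
  | succ n ih =>
    rw [S4_split]
    have h1 : (q 0 : ℕ) ≤ 3 := by omega
    have h2 := ih (fun j => q j.succ)
    have h3 : (q 0 : ℕ) * 4 ^ n ≤ 3 * 4 ^ n := Nat.mul_le_mul_right _ h1
    have : (4:ℕ) ^ (n+1) = 4 * 4 ^ n := by ring
    omega

lemma uniq_div (E a a' s s' : ℕ) (hE : 0 < E) (hs : s < E) (hs' : s' < E)
    (h : a * E + s = a' * E + s') : a = a' ∧ s = s' := by
  have h1 : (a * E + s) / E = a := by
    rw [mul_comm, Nat.mul_add_div hE, Nat.div_eq_of_lt hs]; omega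
  have h2 : (a' * E + s') / E = a' := by
    rw [mul_comm, Nat.mul_add_div hE, Nat.div_eq_of_lt hs']; omega
  have : a = a' := by rw [← h1, ← h2, h]
  constructor
  · exact this
  · subst this; omega

lemma S4_inj (n : ℕ) (q q' : Fin n → Fin 4) (h : S4 n q = S4 n q') : ∀ j, q j = q' j := by
  induction n with
  | zero => intro j; exact absurd j.2 (by omega)
  | succ n ih =>
    rw [S4_split, S4_split] at h
    obtain ⟨h0, hs⟩ := uniq_div (4^n) _ _ _ _ (by positivity)
      (S4_lt n (fun j => q j.succ)) (S4_lt n (fun j => q' j.succ)) h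
    intro j
    rcases Fin.eq_zero_or_eq_succ j with rfl | ⟨i, rfl⟩
    · exact Fin.ext h0
    · exact ih (fun j => q j.succ) (fun j => q' j.succ) hs i

lemma S4_const3 (n : ℕ) : S4 n (fun _ => 3) = 4 ^ n - 1 := by
  induction n with
  | zero => simp [S4]
  | succ n ih =>
    rw [S4_split]
    simp only [ih]
    have : (0:ℕ) < 4 ^ n := by positivity
    have h4 : (4:ℕ) ^ (n+1) = 4 * 4 ^ n := by ring
    have : ((3 : Fin 4) : ℕ) = 3 := rfl
    omega

lemma S4_const0 (n : ℕ) : S4 n (fun _ => 0) = 0 := by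
  simp [S4]

lemma S4_all3 (n : ℕ) (q : Fin n → Fin 4) (h : S4 n q = 4 ^ n - 1) : ∀ j, q j = 3 :=
  S4_inj n q (fun _ => 3) (by rw [h, S4_const3])

lemma S4_all0 (n : ℕ) (q : Fin n → Fin 4) (h : S4 n q = 0) : ∀ j, q j = 0 :=
  S4_inj n q (fun _ => 0) (by rw [h, S4_const0])

end
noncomputable section

lemma pt00_mem : pt 0 0 ∈ Q := by rw [mem_Q_iff]; norm_num
lemma pt10_mem : pt 1 0 ∈ Q := by rw [mem_Q_iff]; norm_num

lemma T0_fix : T 0 (pt 0 0) = pt 0 0 := by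
  rw [T0_apply]; norm_num [pt_0, pt_1]

lemma T3_fix : T 3 (pt 1 0) = pt 1 0 := by
  rw [T3_apply]
  show pt (1 - pt 1 0 1 / 2) (1/2 - pt 1 0 0 / 2) = pt 1 0
  rw [pt_0, pt_1]
  norm_num

lemma step01 : T 1 (pt 0 0) = T 0 (pt 1 0) := by
  rw [T1_apply, T0_apply]
  simp only [pt_0, pt_1]
  norm_num

lemma step12 : T 2 (pt 0 0) = T 1 (pt 1 0) := by
  rw [T2_apply, T1_apply]
  simp only [pt_0, pt_1]
  norm_num

lemma step23 : T 3 (pt 0 0) = T 2 (pt 1 0) := by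
  rw [T3_apply, T2_apply]
  simp only [pt_0, pt_1]
  norm_num

lemma STEP (a a' : Fin 4) (h : (a' : ℕ) = (a : ℕ) + 1) : T a' (pt 0 0) = T a (pt 1 0) := by
  fin_cases a <;> fin_cases a' <;> simp_all <;>
    first | exact step01 | exact step12 | exact step23

lemma compT_zeros (n : ℕ) (q : Fin n → Fin 4) (h : ∀ j, q j = 0) :
    compT n q (pt 0 0) = pt 0 0 := by
  induction n with
  | zero => rfl
  | succ n ih =>
    show T (q 0) (compT n (fun j => q j.succ) (pt 0 0)) = _
    rw [ih (fun j => q j.succ) (fun j => h j.succ), h 0, T0_fix]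

lemma compT_threes (n : ℕ) (q : Fin n → Fin 4) (h : ∀ j, q j = 3) :
    compT n q (pt 1 0) = pt 1 0 := by
  induction n with
  | zero => rfl
  | succ n ih =>
    show T (q 0) (compT n (fun j => q j.succ) (pt 1 0)) = _
    rw [ih (fun j => q j.succ) (fun j => h j.succ), h 0, T3_fix]

lemma ADJ : ∀ n k (q q' : Fin n → Fin 4), k + 1 < 4 ^ n → S4 n q = k → S4 n q' = k + 1 →
    compT n q' (pt 0 0) = compT n q (pt 1 0) := by
  intro n
  induction n with
  | zero => intro k q q' hk; omega
  | succ n ih =>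
    intro k q q' hk hq hq'
    rw [S4_split] at hq hq'
    set s := S4 n (fun j => q j.succ) with hs_def
    set s' := S4 n (fun j => q' j.succ) with hs'_def
    have hslt : s < 4 ^ n := S4_lt _ _
    have hs'lt : s' < 4 ^ n := S4_lt _ _
    have hE : (0:ℕ) < 4 ^ n := by positivity
    show T (q' 0) (compT n (fun j => q' j.succ) (pt 0 0)) =
      T (q 0) (compT n (fun j => q j.succ) (pt 1 0))
    by_cases hcase : s + 1 < 4 ^ n
    · -- no carry
      obtain ⟨ha, hss⟩ := uniq_div (4^n) (q' 0 : ℕ) (q 0 : ℕ) s' (s+1) hE hs'lt hcase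
        (by omega)
      rw [show q' 0 = q 0 from Fin.ext ha]
      rw [ih s (fun j => q j.succ) (fun j => q' j.succ) hcase rfl (by omega)]
    · -- carry
      have hseq : s = 4 ^ n - 1 := by omega
      have hmul : ((q 0 : ℕ) + 1) * 4 ^ n = (q 0 : ℕ) * 4 ^ n + 4 ^ n := by ring
      have hs'0 : s' = 0 := by
        have h4 : (4:ℕ) ^ (n+1) = 4 * 4 ^ n := by ring
        have hq0lt : (q 0 : ℕ) < 4 := (q 0).2
        have hq'0lt : (q' 0 : ℕ) < 4 := (q' 0).2
        obtain ⟨ha, hss⟩ := uniq_div (4^n) (q' 0 : ℕ) ((q 0 : ℕ) + 1) s' 0 hE hs'lt hE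
          (by omega)
        omega
      have ha' : (q' 0 : ℕ) = (q 0 : ℕ) + 1 := by
        obtain ⟨ha, _⟩ := uniq_div (4^n) (q' 0 : ℕ) ((q 0 : ℕ) + 1) s' 0 hE hs'lt hE
          (by omega)
        exact ha
      rw [compT_zeros n _ (S4_all0 n _ hs'0), compT_threes n _ (S4_all3 n _ hseq)]
      exact STEP (q 0) (q' 0) ha'

end
noncomputable section
open Filter Topology

lemma Q_closed : IsClosed Q := by
  have h0 : Continuous fun p : E2 => p 0 := (EuclideanSpace.proj (0 : Fin 2) : E2 →L[ℝ] ℝ).continuous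
  have h1 : Continuous fun p : E2 => p 1 := (EuclideanSpace.proj (1 : Fin 2) : E2 →L[ℝ] ℝ).continuous
  exact IsClosed.inter (isClosed_Icc.preimage h0) (isClosed_Icc.preimage h1)

lemma Q_compact : IsCompact Q := by
  apply Metric.isCompact_of_isClosed_isBounded Q_closed
  apply Metric.isBounded_closedBall (x := pt 0 0) (r := 2) |>.subset
  intro u hu
  rw [Metric.mem_closedBall]
  exact diam_Q u _ hu pt00_mem

def digf (x : ℝ) (j : ℕ) : Fin 4 := ⟨⌊(4:ℝ)^(j+1) * x⌋₊ % 4, Nat.mod_lt _ (by norm_num)⟩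

lemma S4_split_last (n : ℕ) (q : Fin (n+1) → Fin 4) :
    S4 (n+1) q = 4 * S4 n (fun j => q j.castSucc) + (q (Fin.last n) : ℕ) := by
  unfold S4
  rw [Fin.sum_univ_castSucc, Finset.mul_sum]
  congr 1
  · apply Finset.sum_congr rfl
    intro j _
    have h1 : (n + 1) - 1 - ((j.castSucc : Fin (n+1)) : ℕ) = (n - 1 - (j:ℕ)) + 1 := by
      have : ((j.castSucc : Fin (n+1)) : ℕ) = (j : ℕ) := rfl
      omega
    rw [h1, pow_succ]
    ring
  · simp

lemma K (x : ℝ) (h0 : 0 ≤ x) (h1 : x < 1) :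
    ∀ n, ⌊(4:ℝ)^n * x⌋₊ = S4 n (fun j : Fin n => digf x (j : ℕ)) := by
  intro n
  induction n with
  | zero =>
    simp [S4]
    exact h1
  | succ n ih =>
    have hdiv : ⌊(4:ℝ)^(n+1) * x⌋₊ / 4 = ⌊(4:ℝ)^n * x⌋₊ := by
      rw [← Nat.floor_div_natCast]
      congr 1
      push_cast
      ring
    have hmod : (digf x n : ℕ) = ⌊(4:ℝ)^(n+1) * x⌋₊ % 4 := rfl
    rw [S4_split_last]
    have hcast : S4 n (fun j : Fin n => digf x ((j.castSucc : Fin (n+1)) : ℕ))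
        = S4 n (fun j : Fin n => digf x (j : ℕ)) := rfl
    have hlast : ((Fin.last n : Fin (n+1)) : ℕ) = n := rfl
    rw [hcast, hlast, ← ih]
    omega

def pn (n : ℕ) (x : ℝ) : E2 := cT n (digf x) (pt 0 0)

lemma pn_memQ (n : ℕ) (x : ℝ) : pn n x ∈ Q := cT_maps n _ pt00_mem

lemma pn_split (n m : ℕ) (h : n ≤ m) (x : ℝ) :
    pn m x = cT n (digf x) (cT (m - n) (fun j => digf x (n + j)) (pt 0 0)) := by
  unfold pn
  conv_lhs => rw [show m = (m - n) + n by omega]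
  rw [cT_split]

lemma pn_dist (n m : ℕ) (h : n ≤ m) (x : ℝ) : dist (pn n x) (pn m x) ≤ 2 / 2 ^ n := by
  rw [pn_split n m h x]
  unfold pn
  rw [cT_lip]
  have hmem : cT (m - n) (fun j => digf x (n + j)) (pt 0 0) ∈ Q := cT_maps _ _ pt00_mem
  gcongr
  exact diam_Q _ _ pt00_mem hmem

lemma pn_cauchy (x : ℝ) : CauchySeq (fun n => pn n x) := by
  apply cauchySeq_of_le_geometric (1/2 : ℝ) 2 (by norm_num)
  intro n
  have := pn_dist n (n+1) (by omega) x
  calc dist (pn n x) (pn (n+1) x) ≤ 2 / 2 ^ n := this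
    _ = 2 * (1/2)^n := by rw [div_pow]; ring
    _ = 2 * (1/2 : ℝ)^n := by norm_num

def fH (x : ℝ) : E2 := if x = 1 then pt 1 0 else limUnder atTop (fun n => pn n x)

lemma fH_tendsto (x : ℝ) (h : x ≠ 1) : Tendsto (fun n => pn n x) atTop (𝓝 (fH x)) := by
  obtain ⟨l, hl⟩ := cauchySeq_tendsto_of_complete (pn_cauchy x)
  unfold fH
  rw [if_neg h, hl.limUnder_eq]
  exact hl
end
noncomputable section
open Filter Topology

lemma cT_zeros (t : ℕ) (r : ℕ → Fin 4) (h : ∀ j < t, r j = 0) :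
    cT t r (pt 0 0) = pt 0 0 := by
  induction t generalizing r with
  | zero => rfl
  | succ t ih =>
    show T (r 0) (cT t (fun j => r (j+1)) (pt 0 0)) = _
    rw [ih (fun j => r (j+1)) (fun j hj => h (j+1) (by omega)), h 0 (by omega), T0_fix]

lemma M (n k : ℕ) (hk : k < 4 ^ n) (q : Fin n → Fin 4) (hq : S4 n q = k) (x : ℝ)
    (hx1 : (k : ℝ) / 4 ^ n ≤ x) (hx2 : x ≤ ((k : ℝ) + 1) / 4 ^ n) :
    fH x ∈ compT n q '' Q := by
  have h4 : (0:ℝ) < 4 ^ n := by positivity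
  have hxpos : 0 ≤ x := le_trans (by positivity) hx1
  have hkr : (k : ℝ) + 1 ≤ 4 ^ n := by
    have : (k : ℝ) + 1 ≤ ((4:ℕ) ^ n : ℕ) := by exact_mod_cast hk
    simpa using this
  by_cases hend : x = ((k : ℝ) + 1) / 4 ^ n
  · by_cases hlast : k + 1 = 4 ^ n
    · -- x = 1
      have hx1' : x = 1 := by
        rw [hend]
        rw [div_eq_one_iff_eq (ne_of_gt h4)]
        exact_mod_cast congrArg (Nat.cast : ℕ → ℝ) hlast
      rw [hx1']
      have : fH 1 = pt 1 0 := if_pos rfl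
      rw [this]
      exact ⟨pt 1 0, pt10_mem, compT_threes n q (S4_all3 n q (by omega))⟩
    · -- interior dyadic endpoint
      have hk1 : k + 1 < 4 ^ n := by omega
      have hxlt1 : x < 1 := by
        rw [hend, div_lt_one h4]
        have : ((k:ℝ) + 1) = ((k + 1 : ℕ) : ℝ) := by push_cast; ring
        rw [this]
        exact_mod_cast hk1
      have hxne : x ≠ 1 := ne_of_lt hxlt1
      have hzero : ∀ j, n ≤ j → digf x j = 0 := by
        intro j hj
        have hjn : j + 1 - n + n = j + 1 := by omega
        have hxval : (4:ℝ)^(j+1) * x = (((k+1) * 4 ^ (j+1-n) : ℕ) : ℝ) := by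
          rw [hend, ← hjn, pow_add]
          push_cast
          field_simp
          ring
          rw [Nat.add_sub_cancel]
        have : ⌊(4:ℝ)^(j+1) * x⌋₊ = (k+1) * 4 ^ (j+1-n) := by
          rw [hxval, Nat.floor_natCast]
        unfold digf
        apply Fin.ext
        show ⌊(4:ℝ)^(j+1) * x⌋₊ % 4 = 0
        rw [this]
        have : j + 1 - n = (j - n) + 1 := by omega
        rw [this, pow_succ, show (k+1) * (4^(j-n) * 4) = ((k+1) * 4^(j-n)) * 4 by ring]
        exact Nat.mul_mod_left _ _
      have hconst : ∀ m, n ≤ m → pn m x = cT n (digf x) (pt 0 0) := by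
        intro m hm
        rw [pn_split n m hm x, cT_zeros (m - n) _ (fun j hj => hzero (n + j) (by omega))]
      have htend : Tendsto (fun m => pn m x) atTop (𝓝 (cT n (digf x) (pt 0 0))) := by
        apply Tendsto.congr' _ tendsto_const_nhds
        filter_upwards [eventually_ge_atTop n] with m hm
        exact (hconst m hm).symm
      have hfx : fH x = cT n (digf x) (pt 0 0) := by
        have h2 := fH_tendsto x hxne
        exact tendsto_nhds_unique h2 htend
      -- digits of x at level n sum to k+1
      have hfl : ⌊(4:ℝ)^n * x⌋₊ = k + 1 := by
        have : (4:ℝ)^n * x = ((k + 1 : ℕ) : ℝ) := by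
          rw [hend]; push_cast; field_simp
        rw [this, Nat.floor_natCast]
      have hS4 : S4 n (fun j : Fin n => digf x (j:ℕ)) = k + 1 := by
        rw [← K x hxpos hxlt1 n, hfl]
      have hadj := ADJ n k q (fun j : Fin n => digf x (j:ℕ)) hk1 hq hS4
      have hbr : compT n (fun j : Fin n => digf x (j:ℕ)) (pt 0 0) = cT n (digf x) (pt 0 0) :=
        compT_eq_cT n _ (digf x) (fun j => rfl) (pt 0 0)
      rw [hfx, ← hbr, hadj]
      exact ⟨pt 1 0, pt10_mem, rfl⟩
  · -- x strictly inside
    have hxlt : x < ((k : ℝ) + 1) / 4 ^ n := lt_of_le_of_ne hx2 hend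
    have hxlt1 : x < 1 := lt_of_lt_of_le hxlt (by rw [div_le_one h4]; exact hkr)
    have hxne : x ≠ 1 := ne_of_lt hxlt1
    have hfl : ⌊(4:ℝ)^n * x⌋₊ = k := by
      rw [Nat.floor_eq_iff (by positivity)]
      constructor
      · calc (k:ℝ) = ((k:ℝ)/4^n) * 4^n := by field_simp
          _ ≤ x * 4^n := by gcongr
          _ = 4^n * x := by ring
      · calc (4:ℝ)^n * x < 4^n * (((k:ℝ)+1)/4^n) := by gcongr
          _ = (k:ℝ) + 1 := by field_simp
    have hS4 : S4 n (fun j : Fin n => digf x (j:ℕ)) = k := by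
      rw [← K x hxpos hxlt1 n, hfl]
    have hqd : ∀ j : Fin n, digf x (j:ℕ) = q j :=
      fun j => (S4_inj n q (fun j : Fin n => digf x (j:ℕ)) (hq.trans hS4.symm) j).symm
    have hS : IsClosed (cT n (digf x) '' Q) := (Q_compact.image (cT_cont n _)).isClosed
    have hmem : ∀ᶠ m in atTop, pn m x ∈ cT n (digf x) '' Q := by
      filter_upwards [eventually_ge_atTop n] with m hm
      rw [pn_split n m hm x]
      exact ⟨_, cT_maps _ _ pt00_mem, rfl⟩
    have hfx : fH x ∈ cT n (digf x) '' Q := hS.mem_of_tendsto (fH_tendsto x hxne) hmem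
    have : compT n q = cT n (digf x) := funext (fun v => compT_eq_cT n q (digf x) hqd v)
    rw [this]
    exact hfx
end
noncomputable section
open Filter Topology

lemma compT_lip (n : ℕ) (q : Fin n → Fin 4) (u v : E2) :
    dist (compT n q u) (compT n q v) = dist u v / 2 ^ n := by
  induction n generalizing u v with
  | zero => simp [compT]
  | succ n ih =>
    show dist (T (q 0) _) (T (q 0) _) = _
    rw [T_lip, ih]
    ring

lemma compT_maps (n : ℕ) (q : Fin n → Fin 4) : Set.MapsTo (compT n q) Q Q := by
  induction n with
  | zero => intro v hvv; exact hvv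
  | succ n ih => intro v hvv; exact T_mapsQ (q 0) (ih _ hvv)

lemma diam_image (n : ℕ) (q : Fin n → Fin 4) (u v : E2)
    (hu : u ∈ compT n q '' Q) (hv : v ∈ compT n q '' Q) : dist u v ≤ 2 / 2 ^ n := by
  obtain ⟨u', hu', rfl⟩ := hu
  obtain ⟨v', hv', rfl⟩ := hv
  rw [compT_lip]
  gcongr
  exact diam_Q _ _ hu' hv'


lemma EX (n k : ℕ) (hk : k < 4 ^ n) : ∃ q : Fin n → Fin 4, S4 n q = k := by
  induction n generalizing k with
  | zero =>
    refine ⟨fun j => 0, ?_⟩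
    simp [S4]; omega
  | succ n ih =>
    have h4 : (0:ℕ) < 4 ^ n := by positivity
    have hdl : k / 4 ^ n < 4 := by
      rw [Nat.div_lt_iff_lt_mul h4]
      calc k < 4 ^ (n+1) := hk
        _ = 4 * 4 ^ n := by ring
    obtain ⟨q, hq⟩ := ih (k % 4 ^ n) (Nat.mod_lt _ h4)
    refine ⟨Fin.cons ⟨k / 4 ^ n, hdl⟩ q, ?_⟩
    rw [S4_split]
    have h2 : ∀ j : Fin n, (Fin.cons (⟨k / 4 ^ n, hdl⟩ : Fin 4) q : Fin (n+1) → Fin 4) j.succ = q j :=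
      fun j => Fin.cons_succ _ _ j
    have heq : S4 n (fun j => (Fin.cons (⟨k / 4 ^ n, hdl⟩ : Fin 4) q : Fin (n+1) → Fin 4) j.succ)
        = S4 n q := by
      unfold S4
      exact Finset.sum_congr rfl fun j _ => by simp only [h2]
    rw [heq, hq]
    show k / 4 ^ n * 4 ^ n + k % 4 ^ n = k
    exact Nat.div_add_mod' k (4 ^ n)

/-- same-interval estimate -/
lemma C1 (n k : ℕ) (hk : k < 4 ^ n) (x y : ℝ)
    (hx1 : (k : ℝ) / 4 ^ n ≤ x) (hx2 : x ≤ ((k : ℝ) + 1) / 4 ^ n)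
    (hy1 : (k : ℝ) / 4 ^ n ≤ y) (hy2 : y ≤ ((k : ℝ) + 1) / 4 ^ n) :
    dist (fH x) (fH y) ≤ 2 / 2 ^ n := by
  obtain ⟨q, hq⟩ := EX n k hk
  exact diam_image n q _ _ (M n k hk q hq x hx1 hx2) (M n k hk q hq y hy1 hy2)

lemma Ccont (n : ℕ) (x y : ℝ) (hx : x ∈ Set.Icc (0:ℝ) 1) (hy : y ∈ Set.Icc (0:ℝ) 1)
    (hxy : |x - y| ≤ 1 / 4 ^ n) : dist (fH x) (fH y) ≤ 4 / 2 ^ n := by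
  wlog hle : x ≤ y generalizing x y
  · rw [dist_comm]
    exact this y x hy hx (by rwa [abs_sub_comm]) (by linarith)
  have h4 : (0:ℝ) < 4 ^ n := by positivity
  set k : ℕ := min ⌊(4:ℝ)^n * x⌋₊ (4 ^ n - 1) with hkdef
  have h4n1 : 1 ≤ 4 ^ n := Nat.one_le_pow _ _ (by norm_num)
  have hk : k < 4 ^ n := by
    have : k ≤ 4 ^ n - 1 := min_le_right _ _
    omega
  have hxlow : (k : ℝ) / 4 ^ n ≤ x := by
    rw [div_le_iff₀ h4]
    have h1 : (k:ℕ) ≤ ⌊(4:ℝ)^n * x⌋₊ := min_le_left _ _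
    have h2 : (⌊(4:ℝ)^n * x⌋₊ : ℝ) ≤ 4 ^ n * x := Nat.floor_le (by nlinarith [hx.1])
    calc (k:ℝ) ≤ (⌊(4:ℝ)^n * x⌋₊ : ℝ) := by exact_mod_cast h1
      _ ≤ 4 ^ n * x := h2
      _ = x * 4 ^ n := by ring
  have hxhigh : x ≤ ((k : ℝ) + 1) / 4 ^ n := by
    rcases eq_or_lt_of_le hx.2 with h1 | h1
    · -- x = 1
      have hfloor : ⌊(4:ℝ)^n * x⌋₊ = 4 ^ n := by
        rw [h1, mul_one, show ((4:ℝ)^n) = ((4^n : ℕ) : ℝ) by push_cast; ring, Nat.floor_natCast]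
      have hkval : k = 4 ^ n - 1 := by omega
      rw [h1, hkval, le_div_iff₀ h4]
      push_cast [Nat.cast_sub h4n1]
      norm_num
    · -- x < 1
      have hfl_lt : (4:ℝ)^n * x < ⌊(4:ℝ)^n * x⌋₊ + 1 := Nat.lt_floor_add_one _
      have hub : (4:ℝ)^n * x < 4 ^ n := by nlinarith
      have hfl_le : ⌊(4:ℝ)^n * x⌋₊ ≤ 4 ^ n - 1 := by
        by_contra hcon
        have hge : ((4:ℕ)^n : ℝ) ≤ (⌊(4:ℝ)^n * x⌋₊ : ℝ) := by
          exact_mod_cast (by omega : (4:ℕ)^n ≤ ⌊(4:ℝ)^n * x⌋₊)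
        have hfl2 := Nat.floor_le (by nlinarith [hx.1] : (0:ℝ) ≤ (4:ℝ)^n * x)
        push_cast at hge
        nlinarith
      have hkeq : k = ⌊(4:ℝ)^n * x⌋₊ := by omega
      rw [le_div_iff₀ h4, hkeq]
      exact le_of_lt (by rw [mul_comm]; exact hfl_lt)
  have hylow : (k : ℝ) / 4 ^ n ≤ y := le_trans hxlow hle
  by_cases hcase : y ≤ ((k : ℝ) + 1) / 4 ^ n
  · calc dist (fH x) (fH y) ≤ 2 / 2 ^ n := C1 n k hk x y hxlow hxhigh hylow hcase
      _ ≤ 4 / 2 ^ n := by gcongr <;> norm_num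
  · push_neg at hcase
    have hk1 : k + 1 < 4 ^ n := by
      by_contra hcon
      have hkeq : k + 1 = 4 ^ n := by omega
      have heq1 : ((k:ℝ) + 1) / 4 ^ n = 1 := by
        rw [div_eq_one_iff_eq (ne_of_gt h4)]
        exact_mod_cast congrArg (Nat.cast : ℕ → ℝ) hkeq
      rw [heq1] at hcase
      linarith [hy.2]
    have hyhigh : y ≤ ((k:ℝ) + 1 + 1) / 4 ^ n := by
      have habs : y ≤ x + 1 / 4 ^ n := by
        have := abs_le.1 hxy
        have h2 := this.1
        linarith [abs_le.1 hxy |>.1]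
      calc y ≤ x + 1 / 4 ^ n := habs
        _ ≤ ((k:ℝ) + 1) / 4 ^ n + 1 / 4 ^ n := by linarith
        _ = ((k:ℝ) + 1 + 1) / 4 ^ n := by ring
    set m : ℝ := ((k:ℝ) + 1) / 4 ^ n with hm
    have hcast : ((k + 1 : ℕ) : ℝ) = (k : ℝ) + 1 := by push_cast; ring
    have e1 : dist (fH x) (fH m) ≤ 2 / 2 ^ n :=
      C1 n k hk x m hxlow hxhigh (by rw [hm]; exact (div_le_div_iff_of_pos_right h4).mpr (by linarith)) (le_refl m)
    have e2 : dist (fH m) (fH y) ≤ 2 / 2 ^ n := by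
      have := C1 n (k+1) hk1 m y (by rw [hm, hcast]) (by rw [hcast]; exact (div_le_div_iff_of_pos_right h4).mpr (by linarith))
        (by rw [hcast]; exact le_of_lt hcase) (by rw [hcast]; exact hyhigh)
      exact this
    calc dist (fH x) (fH y) ≤ dist (fH x) (fH m) + dist (fH m) (fH y) := dist_triangle _ _ _
      _ ≤ 2 / 2 ^ n + 2 / 2 ^ n := by linarith
      _ = 4 / 2 ^ n := by ring
noncomputable section
open Filter Topology

lemma cover_ex : ∀ v ∈ Q, ∃ p : Fin 4 × E2, p.2 ∈ Q ∧ T p.1 p.2 = v := by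
  intro v hv
  rw [E2_eta v, mem_Q_iff] at hv
  obtain ⟨⟨h1, h2⟩, h3, h4⟩ := hv
  rcases le_total (v 0) (1/2) with ha | ha <;> rcases le_total (v 1) (1/2) with hb | hb
  · refine ⟨(0, pt (2 * v 1) (2 * v 0)), ?_, ?_⟩
    · rw [mem_Q_iff]; constructor <;> constructor <;> linarith
    · rw [T0_apply]
      simp only [pt_0, pt_1]
      conv_rhs => rw [E2_eta v]
      norm_num
  · refine ⟨(1, pt (2 * v 0) (2 * v 1 - 1)), ?_, ?_⟩
    · rw [mem_Q_iff]; constructor <;> constructor <;> linarith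
    · rw [T1_apply]
      simp only [pt_0, pt_1]
      conv_rhs => rw [E2_eta v]
      have e2 : (2 * v 1 - 1) / 2 + 1/2 = v 1 := by ring
      rw [e2]
      norm_num
  · refine ⟨(3, pt (1 - 2 * v 1) (2 - 2 * v 0)), ?_, ?_⟩
    · rw [mem_Q_iff]; constructor <;> constructor <;> linarith
    · rw [T3_apply]
      simp only [pt_0, pt_1]
      conv_rhs => rw [E2_eta v]
      have e1 : 1 - (2 - 2 * v 0) / 2 = v 0 := by ring
      have e2 : 1/2 - (1 - 2 * v 1) / 2 = v 1 := by ring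
      rw [e1, e2]
  · refine ⟨(2, pt (2 * v 0 - 1) (2 * v 1 - 1)), ?_, ?_⟩
    · rw [mem_Q_iff]; constructor <;> constructor <;> linarith
    · rw [T2_apply]
      simp only [pt_0, pt_1]
      conv_rhs => rw [E2_eta v]
      have e1 : (2 * v 0 - 1) / 2 + 1/2 = v 0 := by ring
      have e2 : (2 * v 1 - 1) / 2 + 1/2 = v 1 := by ring
      rw [e1, e2]

def seqW (y : E2) (hy : y ∈ Q) : ℕ → {v : E2 // v ∈ Q}
  | 0 => ⟨y, hy⟩
  | t+1 => ⟨(cover_ex (seqW y hy t).1 (seqW y hy t).2).choose.2,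
      (cover_ex (seqW y hy t).1 (seqW y hy t).2).choose_spec.1⟩

def seqS (y : E2) (hy : y ∈ Q) (t : ℕ) : Fin 4 :=
  (cover_ex (seqW y hy t).1 (seqW y hy t).2).choose.1

lemma seqW_spec (y : E2) (hy : y ∈ Q) (t : ℕ) :
    T (seqS y hy t) (seqW y hy (t+1)).1 = (seqW y hy t).1 :=
  (cover_ex (seqW y hy t).1 (seqW y hy t).2).choose_spec.2

lemma cT_word : ∀ t (s : ℕ → Fin 4) (w : ℕ → E2),
    (∀ i, T (s i) (w (i+1)) = w i) → cT t s (w t) = w 0 := by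
  intro t
  induction t with
  | zero => intro s w h; rfl
  | succ t ih =>
    intro s w h
    show T (s 0) (cT t (fun j => s (j+1)) (w (t+1))) = w 0
    have := ih (fun j => s (j+1)) (fun i => w (i+1)) (fun i => h (i+1))
    rw [this]
    exact h 0

lemma geom_sum_bound (s : ℕ → Fin 4) : Summable (fun j => ((s j : ℕ) : ℝ) / 4 ^ (j+1)) := by
  refine Summable.of_nonneg_of_le (fun j => by positivity)
    (fun j => ?_) (summable_geometric_of_lt_one (by norm_num) (by norm_num) : Summable fun j => (1/4 : ℝ)^j)
  calc ((s j : ℕ) : ℝ) / 4 ^ (j+1) ≤ 4 / 4 ^ (j+1) := by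
        gcongr
        exact_mod_cast le_of_lt (s j).2
    _ = (1/4 : ℝ)^j := by
        rw [div_pow, one_pow, pow_succ]
        field_simp

end
noncomputable section
open Filter Topology

lemma tsum_head (s : ℕ → Fin 4) (n : ℕ) :
    ∑ j ∈ Finset.range n, ((s j : ℕ) : ℝ) / 4 ^ (j+1)
      = (S4 n (fun j : Fin n => s (j : ℕ)) : ℝ) / 4 ^ n := by
  rw [← Fin.sum_univ_eq_sum_range]
  unfold S4
  push_cast
  rw [Finset.sum_div]
  apply Finset.sum_congr rfl
  intro j _
  have hj : (j : ℕ) < n := j.isLt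
  have h1 : (0:ℝ) < 4 ^ ((j:ℕ)+1) := by positivity
  have h2 : (0:ℝ) < 4 ^ n := by positivity
  rw [div_eq_div_iff (ne_of_gt h1) (ne_of_gt h2), mul_assoc, ← pow_add]
  have hexp : (n - 1 - (j:ℕ)) + ((j:ℕ)+1) = n := by omega
  rw [hexp]

set_option maxHeartbeats 1000000 in
lemma tsum_tail_le (s : ℕ → Fin 4) (n : ℕ) :
    ∑' j, ((s (j + n) : ℕ) : ℝ) / 4 ^ ((j + n)+1) ≤ 1 / 4 ^ n := by
  have hgeo : Summable fun j : ℕ => (3 / 4 ^ (n+1) : ℝ) * (1/4)^j :=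
    (summable_geometric_of_lt_one (by norm_num) (by norm_num)).mul_left _
  have hsummand : ∀ j : ℕ, ((s (j + n) : ℕ) : ℝ) / 4 ^ ((j + n)+1)
      ≤ (3 / 4 ^ (n+1) : ℝ) * (1/4)^j := by
    intro j
    have h1 : ((s (j + n) : ℕ) : ℝ) ≤ 3 := by
      exact_mod_cast (by omega : ((s (j+n) : Fin 4) : ℕ) ≤ 3)
    have heq : (3 / 4 ^ (n+1) : ℝ) * (1/4)^j = 3 / 4 ^ ((j + n)+1) := by
      rw [div_pow, one_pow, div_mul_div_comm, ← pow_add]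
      congr 2
      · norm_num
      · omega
    rw [heq]
    gcongr
  have hshift : Summable fun j : ℕ => ((s (j + n) : ℕ) : ℝ) / 4 ^ ((j + n)+1) :=
    (summable_nat_add_iff n).2 (geom_sum_bound s)
  calc ∑' j, ((s (j + n) : ℕ) : ℝ) / 4 ^ ((j + n)+1)
      ≤ ∑' j, (3 / 4 ^ (n+1) : ℝ) * (1/4)^j := Summable.tsum_le_tsum hsummand hshift hgeo
    _ = (3 / 4 ^ (n+1) : ℝ) * (1 - 1/4)⁻¹ := by
        rw [tsum_mul_left, tsum_geometric_of_lt_one (by norm_num) (by norm_num)]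
    _ = 1 / 4 ^ n := by
        rw [pow_succ]
        field_simp
        ring
noncomputable section
open Filter Topology

lemma x_bounds (s : ℕ → Fin 4) (n : ℕ) :
    (S4 n (fun j : Fin n => s (j:ℕ)) : ℝ) / 4 ^ n ≤ (∑' j : ℕ, ((s j : ℕ) : ℝ) / 4 ^ (j+1)) ∧
    (∑' j : ℕ, ((s j : ℕ) : ℝ) / 4 ^ (j+1)) ≤ ((S4 n (fun j : Fin n => s (j:ℕ)) : ℝ) + 1) / 4 ^ n := by
  have hsum := geom_sum_bound s
  have hsplit : (S4 n (fun j : Fin n => s (j:ℕ)) : ℝ) / 4 ^ n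
      + ∑' j : ℕ, ((s (j + n) : ℕ) : ℝ) / 4 ^ ((j + n)+1)
      = ∑' j : ℕ, ((s j : ℕ) : ℝ) / 4 ^ (j+1) := by
    rw [← tsum_head s n]
    exact hsum.sum_add_tsum_nat_add n
  have htail_le := tsum_tail_le s n
  have htail_ge : (0:ℝ) ≤ ∑' j : ℕ, ((s (j + n) : ℕ) : ℝ) / 4 ^ ((j + n)+1) :=
    tsum_nonneg (fun j => by positivity)
  have h4 : (0:ℝ) < 4 ^ n := by positivity
  constructor
  · linarith
  · have heq : ((S4 n (fun j : Fin n => s (j:ℕ)) : ℝ) + 1) / 4 ^ n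
        = (S4 n (fun j : Fin n => s (j:ℕ)) : ℝ) / 4 ^ n + 1 / 4 ^ n := by ring
    linarith

lemma fH_surj : Set.SurjOn fH (Set.Icc 0 1) Q := by
  intro y hy
  set s : ℕ → Fin 4 := seqS y hy with hs
  have hsum := geom_sum_bound s
  refine ⟨∑' j : ℕ, ((s j : ℕ) : ℝ) / 4 ^ (j+1), ?_, ?_⟩
  · constructor
    · exact tsum_nonneg (fun j => by positivity)
    · have := (x_bounds s 0).2
      simpa [S4] using this
  · -- fH x = y
    set x : ℝ := ∑' j : ℕ, ((s j : ℕ) : ℝ) / 4 ^ (j+1) with hxdef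
    have key : ∀ n : ℕ, dist (fH x) y ≤ 2 / 2 ^ n := by
      intro n
      obtain ⟨hb1, hb2⟩ := x_bounds s n
      have hS4lt := S4_lt n (fun j : Fin n => s (j:ℕ))
      have hfx := M n (S4 n (fun j : Fin n => s (j:ℕ))) hS4lt (fun j : Fin n => s (j:ℕ)) rfl x hb1 hb2
      have hy' : y ∈ compT n (fun j : Fin n => s (j:ℕ)) '' Q := by
        refine ⟨(seqW y hy n).1, (seqW y hy n).2, ?_⟩
        rw [compT_eq_cT n (fun j : Fin n => s (j:ℕ)) s (fun j => rfl)]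
        exact cT_word n s (fun i => (seqW y hy i).1) (fun i => seqW_spec y hy i)
      exact diam_image n _ _ _ hfx hy'
    have h0 : Tendsto (fun n : ℕ => (2:ℝ) / 2 ^ n) atTop (𝓝 0) := by
      have h1 := tendsto_pow_atTop_nhds_zero_of_lt_one
        (by norm_num : (0:ℝ) ≤ 1/2) (by norm_num : (1/2:ℝ) < 1)
      have h2 := h1.const_mul (2:ℝ)
      rw [mul_zero] at h2
      apply h2.congr
      intro n
      rw [div_pow, one_pow]
      ring
    have hle : dist (fH x) y ≤ 0 := ge_of_tendsto h0 (Eventually.of_forall key)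
    exact dist_le_zero.1 hle

theorem hilbert_curve_exists' :
    ∃ f : ℝ → E2, ContinuousOn f (Set.Icc 0 1) ∧
      Set.MapsTo f (Set.Icc 0 1) Q ∧ Set.SurjOn f (Set.Icc 0 1) Q ∧
      ∀ n : ℕ, 1 ≤ n → ∀ k : ℕ, k < 4 ^ n → ∀ q : Fin n → Fin 4,
        k = ∑ j : Fin n, (q j : ℕ) * 4 ^ (n - 1 - (j : ℕ)) →
        Set.MapsTo f (Set.Icc ((k : ℝ) / 4 ^ n) (((k : ℝ) + 1) / 4 ^ n))
          (compT n q '' Q) := by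
  refine ⟨fH, ?_, ?_, fH_surj, ?_⟩
  · rw [Metric.continuousOn_iff]
    intro x hx ε hε
    obtain ⟨n, hn⟩ : ∃ n : ℕ, (4:ℝ) / 2 ^ n < ε := by
      obtain ⟨n, hn⟩ := exists_pow_lt_of_lt_one (show (0:ℝ) < ε/4 by linarith)
        (by norm_num : (1/2:ℝ) < 1)
      refine ⟨n, ?_⟩
      have h2 : (0:ℝ) < 2 ^ n := by positivity
      rw [div_pow, one_pow] at hn
      rw [div_lt_iff₀ h2]
      have h3 : 1 < ε / 4 * 2 ^ n := (div_lt_iff₀ h2).1 hn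
      nlinarith [h3]
    refine ⟨1 / 4 ^ n, by positivity, fun y hy hdist => ?_⟩
    have habs : |y - x| ≤ 1 / 4 ^ n := by
      rw [Real.dist_eq] at hdist
      exact le_of_lt hdist
    calc dist (fH y) (fH x) ≤ 4 / 2 ^ n := Ccont n y x hy hx habs
      _ < ε := hn
  · intro x hx
    have := M 0 0 (by norm_num) (fun j => 0) (by simp [S4]) x (by simpa using hx.1)
      (by norm_num; exact hx.2)
    simpa [compT] using this
  · intro n _ k hk q hq
    intro x hx
    exact M n k hk q hq.symm x hx.1 hx.2

end


/-- existence of Hilbert's space-filling curve: a continuous surjection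
f : [0,1] → Q mapping each interval [k/4ⁿ,(k+1)/4ⁿ] into the corresponding sub-square. -/
theorem hilbert_curve_exists :
    ∃ f : ℝ → E2, ContinuousOn f (Set.Icc 0 1) ∧
      Set.MapsTo f (Set.Icc 0 1) Q ∧ Set.SurjOn f (Set.Icc 0 1) Q ∧
      ∀ n : ℕ, 1 ≤ n → ∀ k : ℕ, k < 4 ^ n → ∀ q : Fin n → Fin 4,
        k = ∑ j : Fin n, (q j : ℕ) * 4 ^ (n - 1 - (j : ℕ)) →
        Set.MapsTo f (Set.Icc ((k : ℝ) / 4 ^ n) (((k : ℝ) + 1) / 4 ^ n))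
          (compT n q '' Q) := hilbert_curve_exists'

end
end
end
end

section
/- The n-th order Hilbert node map visits every sub-square center exactly once: for every n ≥ 1, the map k ↦ node_n(k) is a bijection from {0, 1, …, 4^n − 1} onto the grid of centers {((2i+1)/2^{n+1}, (2j+1)/2^{n+1}) : 0 ≤ i, j ≤ 2^n − 1}. -/
open Matrix

noncomputable section

lemma T0_pt (x y : ℝ) : T 0 (pt x y) = pt (y/2) (x/2) := by
  ext i
  fin_cases i <;>
    simp [T, toE, pt, Hm, hv, Matrix.mulVec, dotProduct, Fin.sum_univ_two] <;>
    ring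

lemma T1_pt (x y : ℝ) : T 1 (pt x y) = pt (x/2) ((y+1)/2) := by
  ext i
  fin_cases i <;>
    simp [T, toE, pt, Hm, hv, Matrix.mulVec, dotProduct, Fin.sum_univ_two] <;>
    ring

lemma T2_pt (x y : ℝ) : T 2 (pt x y) = pt ((x+1)/2) ((y+1)/2) := by
  ext i
  fin_cases i <;>
    simp [T, toE, pt, Hm, hv, Matrix.mulVec, dotProduct, Fin.sum_univ_two] <;>
    ring

lemma T3_pt (x y : ℝ) : T 3 (pt x y) = pt ((2-y)/2) ((1-x)/2) := by
  ext i
  fin_cases i <;>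
    simp [T, toE, pt, Hm, hv, Matrix.mulVec, dotProduct, Fin.sum_univ_two] <;>
    ring

def ctr (n i j : ℕ) : E2 :=
  pt ((2 * (i : ℝ) + 1) / 2 ^ (n + 1)) ((2 * (j : ℝ) + 1) / 2 ^ (n + 1))

lemma ctr_inj {n i j i' j' : ℕ} (h : ctr n i j = ctr n i' j') : i = i' ∧ j = j' := by
  have h0 := congrArg (fun p : E2 => p 0) h
  have h1 := congrArg (fun p : E2 => p 1) h
  simp only [ctr, pt, PiLp.toLp_apply, Matrix.cons_val_zero, Matrix.cons_val_one, Matrix.head_cons] at h0 h1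
  have hp : (2:ℝ) ^ (n+1) ≠ 0 := by positivity
  rw [div_eq_div_iff hp hp] at h0 h1
  have h0' := mul_right_cancel₀ hp h0
  have h1' := mul_right_cancel₀ hp h1
  constructor
  · have : (i:ℝ) = i' := by linarith
    exact_mod_cast this
  · have : (j:ℝ) = j' := by linarith
    exact_mod_cast this

def idxMap (n : ℕ) (d : Fin 4) (ij : ℕ × ℕ) : ℕ × ℕ :=
  match d with
  | 0 => (ij.2, ij.1)
  | 1 => (ij.1, ij.2 + 2 ^ n)
  | 2 => (ij.1 + 2 ^ n, ij.2 + 2 ^ n)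
  | 3 => (2 ^ (n+1) - 1 - ij.2, 2 ^ n - 1 - ij.1)

lemma T_ctr (n : ℕ) (d : Fin 4) {i j : ℕ} (hi : i < 2 ^ n) (hj : j < 2 ^ n) :
    T d (ctr n i j) = ctr (n+1) (idxMap n d (i,j)).1 (idxMap n d (i,j)).2 := by
  have hpow : (2:ℕ) ^ (n+1) = 2 * 2 ^ n := by ring
  have c1 : ((2 ^ (n+1) - 1 - j : ℕ) : ℝ) = 2 * 2 ^ n - 1 - (j:ℝ) := by
    rw [Nat.sub_sub, Nat.cast_sub (by omega : 1 + j ≤ 2 ^ (n+1))]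
    push_cast
    ring
  have c2 : ((2 ^ n - 1 - i : ℕ) : ℝ) = 2 ^ n - 1 - (i:ℝ) := by
    rw [Nat.sub_sub, Nat.cast_sub (by omega : 1 + i ≤ 2 ^ n)]
    push_cast
    ring
  fin_cases d
  · show T 0 (ctr n i j) = ctr (n+1) (idxMap n 0 (i,j)).1 (idxMap n 0 (i,j)).2
    simp only [idxMap, ctr, T0_pt]
    refine congrArg₂ pt ?_ ?_ <;> (push_cast [c1, c2]; field_simp; try first | ring1 | (left; trivial) | (left; ring1))
  · show T 1 (ctr n i j) = ctr (n+1) (idxMap n 1 (i,j)).1 (idxMap n 1 (i,j)).2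
    simp only [idxMap, ctr, T1_pt]
    refine congrArg₂ pt ?_ ?_ <;> (push_cast [c1, c2]; field_simp; try first | ring1 | (left; trivial) | (left; ring1))
  · show T 2 (ctr n i j) = ctr (n+1) (idxMap n 2 (i,j)).1 (idxMap n 2 (i,j)).2
    simp only [idxMap, ctr, T2_pt]
    refine congrArg₂ pt ?_ ?_ <;> (push_cast [c1, c2]; field_simp; try first | ring1 | (left; trivial) | (left; ring1))
  · show T 3 (ctr n i j) = ctr (n+1) (idxMap n 3 (i,j)).1 (idxMap n 3 (i,j)).2
    simp only [idxMap, ctr, T3_pt]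
    refine congrArg₂ pt ?_ ?_ <;> (push_cast [c1, c2]; field_simp; try first | ring1 | (left; trivial) | (left; ring1))

lemma idxMap_bounds (n : ℕ) (d : Fin 4) {i j : ℕ} (hi : i < 2 ^ n) (hj : j < 2 ^ n) :
    (idxMap n d (i,j)).1 < 2 ^ (n+1) ∧ (idxMap n d (i,j)).2 < 2 ^ (n+1) := by
  have hpow : (2:ℕ) ^ (n+1) = 2 * 2 ^ n := by ring
  fin_cases d <;> simp only [idxMap] <;> omega

lemma idxMap_d_inj (n : ℕ) (d d' : Fin 4) {i j i' j' : ℕ}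
    (hi : i < 2 ^ n) (hj : j < 2 ^ n) (hi' : i' < 2 ^ n) (hj' : j' < 2 ^ n)
    (h : idxMap n d (i,j) = idxMap n d' (i',j')) : d = d' := by
  have hpow : (2:ℕ) ^ (n+1) = 2 * 2 ^ n := by ring
  fin_cases d <;> fin_cases d' <;>
    simp only [idxMap, Prod.mk.injEq] at h <;>
    first | rfl | (exfalso; omega)

lemma idxMap_inj (n : ℕ) (d : Fin 4) {i j i' j' : ℕ}
    (hi : i < 2 ^ n) (hj : j < 2 ^ n) (hi' : i' < 2 ^ n) (hj' : j' < 2 ^ n)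
    (h : idxMap n d (i,j) = idxMap n d (i',j')) : i = i' ∧ j = j' := by
  have hpow : (2:ℕ) ^ (n+1) = 2 * 2 ^ n := by ring
  fin_cases d <;> simp only [idxMap, Prod.mk.injEq] at h <;> omega

lemma idxMap_surj (n : ℕ) {a b : ℕ} (ha : a < 2 ^ (n+1)) (hb : b < 2 ^ (n+1)) :
    ∃ d : Fin 4, ∃ i j : ℕ, i < 2 ^ n ∧ j < 2 ^ n ∧ idxMap n d (i,j) = (a,b) := by
  have hpow : (2:ℕ) ^ (n+1) = 2 * 2 ^ n := by ring
  rcases lt_or_ge a (2^n) with ha' | ha' <;> rcases lt_or_ge b (2^n) with hb' | hb'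
  · exact ⟨0, b, a, hb', ha', rfl⟩
  · exact ⟨1, a, b - 2^n, ha', by omega, by simp only [idxMap, Prod.mk.injEq]; constructor <;> first | trivial | omega⟩
  · exact ⟨3, 2^n - 1 - b, 2^(n+1) - 1 - a, by omega, by omega, by simp only [idxMap, Prod.mk.injEq]; constructor <;> first | trivial | omega⟩
  · exact ⟨2, a - 2^n, b - 2^n, by omega, by omega, by simp only [idxMap, Prod.mk.injEq]; constructor <;> first | trivial | omega⟩

lemma hdigit_succ (m k j : ℕ) : hdigit (m+2) k (j+1) = hdigit (m+1) (k % 4^(m+1)) j := by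
  apply Fin.ext
  show k / 4 ^ (m + 2 - 1 - (j+1)) % 4 = k % 4^(m+1) / 4 ^ (m + 1 - 1 - j) % 4
  have he : m + 2 - 1 - (j+1) = m - j := by omega
  have he2 : m + 1 - 1 - j = m - j := by omega
  rw [he, he2]
  have h4 : (4:ℕ)^(m+1) = 4^(m-j) * 4^(m+1-(m-j)) := by rw [← pow_add]; congr 1; omega
  rw [h4, Nat.mod_mul_right_div_self, Nat.mod_mod_of_dvd _ (dvd_pow_self 4 (by omega))]

lemma node_succ (m k : ℕ) :
    node (m+2) k = T (hdigit (m+2) k 0) (node (m+1) (k % 4^(m+1))) := by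
  show nodeAux (m+1) (hdigit (m+2) k) = _
  rw [nodeAux]
  refine congrArg (T (hdigit (m+2) k 0)) ?_
  show nodeAux m (fun j => hdigit (m+2) k (j+1)) = nodeAux m (hdigit (m+1) (k % 4^(m+1)))
  exact congrArg (nodeAux m) (funext fun j => hdigit_succ m k j)

lemma hdigit0_eq (m k : ℕ) (d : Fin 4) (h : k / 4 ^ (m+1) % 4 = d.val) :
    hdigit (m+2) k 0 = d := by
  apply Fin.ext
  show k / 4 ^ (m + 2 - 1 - 0) % 4 = d.val
  rw [show m + 2 - 1 - 0 = m + 1 from rfl]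
  exact h

lemma node_one (k : ℕ) (h : k < 4) : node 1 k = Fv ⟨k, h⟩ := by
  show Fv (hdigit 1 k 0) = Fv ⟨k, h⟩
  suffices h2 : hdigit 1 k 0 = ⟨k, h⟩ by rw [h2]
  apply Fin.ext
  show k / 4 ^ (1 - 1 - 0) % 4 = k
  simp [Nat.mod_eq_of_lt h]

lemma nv0 : node 1 0 = ctr 1 0 0 := by
  rw [node_one 0 (by norm_num)]
  show pt (1/4) (1/4) = _
  simp only [ctr]
  norm_num

lemma nv1 : node 1 1 = ctr 1 0 1 := by
  rw [node_one 1 (by norm_num)]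
  show pt (1/4) (3/4) = _
  simp only [ctr]
  norm_num

lemma nv2 : node 1 2 = ctr 1 1 1 := by
  rw [node_one 2 (by norm_num)]
  show pt (3/4) (3/4) = _
  simp only [ctr]
  norm_num

lemma nv3 : node 1 3 = ctr 1 1 0 := by
  rw [node_one 3 (by norm_num)]
  show pt (3/4) (1/4) = _
  simp only [ctr]
  norm_num

def Sgrid (n : ℕ) : Set E2 := {p | ∃ i j : ℕ, i < 2 ^ n ∧ j < 2 ^ n ∧ p = ctr n i j}

lemma key (m : ℕ) : Set.BijOn (node (m+1)) {k : ℕ | k < 4 ^ (m+1)} (Sgrid (m+1)) := by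
  induction m with
  | zero =>
    refine ⟨?_, ?_, ?_⟩
    · intro k hk
      have hk4 : k < 4 := hk
      interval_cases k
      · exact ⟨0, 0, by norm_num, by norm_num, nv0⟩
      · exact ⟨0, 1, by norm_num, by norm_num, nv1⟩
      · exact ⟨1, 1, by norm_num, by norm_num, nv2⟩
      · exact ⟨1, 0, by norm_num, by norm_num, nv3⟩
    · intro k hk k' hk' h
      have hk4 : k < 4 := hk
      have hk4' : k' < 4 := hk'
      replace h : node 1 k = node 1 k' := h
      interval_cases k <;> interval_cases k' <;>
        simp only [nv0, nv1, nv2, nv3] at h <;>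
        first | rfl | (have := ctr_inj h; omega)
    · intro p hp
      obtain ⟨i, j, hi, hj, rfl⟩ := hp
      interval_cases i <;> interval_cases j
      · exact ⟨0, by norm_num, nv0⟩
      · exact ⟨1, by norm_num, nv1⟩
      · exact ⟨3, by norm_num, nv3⟩
      · exact ⟨2, by norm_num, nv2⟩
  | succ m ih =>
    have hpos : 0 < (4:ℕ) ^ (m+1) := by positivity
    have h4 : (4:ℕ) ^ (m+2) = 4 ^ (m+1) * 4 := by ring
    refine ⟨?_, ?_, ?_⟩
    · intro k hk
      have hr : k % 4^(m+1) < 4^(m+1) := Nat.mod_lt _ hpos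
      obtain ⟨i, j, hi, hj, hn⟩ := ih.1 hr
      have hmem : node (m+2) k ∈ Sgrid (m+2) := by
        rw [node_succ, hn, T_ctr _ _ hi hj]
        obtain ⟨b1, b2⟩ := idxMap_bounds (m+1) (hdigit (m+2) k 0) hi hj
        exact ⟨_, _, b1, b2, rfl⟩
      exact hmem
    · intro k hk k' hk' heq
      have hklt : k < 4^(m+2) := hk
      have hklt' : k' < 4^(m+2) := hk'
      have hr : k % 4^(m+1) < 4^(m+1) := Nat.mod_lt _ hpos
      have hr' : k' % 4^(m+1) < 4^(m+1) := Nat.mod_lt _ hpos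
      obtain ⟨i, j, hi, hj, hn⟩ := ih.1 hr
      obtain ⟨i', j', hi', hj', hn'⟩ := ih.1 hr'
      rw [node_succ, node_succ, hn, hn', T_ctr _ _ hi hj, T_ctr _ _ hi' hj'] at heq
      obtain ⟨ha, hb⟩ := ctr_inj heq
      have hP : idxMap (m+1) (hdigit (m+2) k 0) (i,j)
          = idxMap (m+1) (hdigit (m+2) k' 0) (i',j') := Prod.ext ha hb
      have hdd := idxMap_d_inj (m+1) _ _ hi hj hi' hj' hP
      rw [hdd] at hP
      obtain ⟨hii, hjj⟩ := idxMap_inj (m+1) _ hi hj hi' hj' hP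
      have hreq : k % 4^(m+1) = k' % 4^(m+1) :=
        ih.2.1 hr hr' (by rw [hn, hn', hii, hjj])
      have hdval : k / 4^(m+1) % 4 = k' / 4^(m+1) % 4 := congrArg Fin.val hdd
      have e1 := Nat.div_add_mod k (4^(m+1))
      have e2 := Nat.div_add_mod k' (4^(m+1))
      have hdk : k / 4^(m+1) < 4 := Nat.div_lt_of_lt_mul (by omega)
      have hdk' : k' / 4^(m+1) < 4 := Nat.div_lt_of_lt_mul (by omega)
      rw [Nat.mod_eq_of_lt hdk, Nat.mod_eq_of_lt hdk'] at hdval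
      rw [← e1, ← e2, hdval, hreq]
    · intro p hp
      obtain ⟨a, b, ha, hb, rfl⟩ := hp
      obtain ⟨d, i, j, hi, hj, hij⟩ := idxMap_surj (m+1) ha hb
      obtain ⟨r, hrmem, hrn⟩ := ih.2.2 ⟨i, j, hi, hj, rfl⟩
      have hrlt : r < 4^(m+1) := hrmem
      refine ⟨4^(m+1) * d.val + r, ?_, ?_⟩
      · show 4^(m+1) * d.val + r < 4^(m+2)
        calc 4^(m+1) * d.val + r < 4^(m+1) * d.val + 4^(m+1) := by omega
          _ = 4^(m+1) * (d.val + 1) := by ring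
          _ ≤ 4^(m+1) * 4 := Nat.mul_le_mul_left _ (by omega)
          _ = 4^(m+2) := by ring
      · have h1 : (4^(m+1) * d.val + r) % 4^(m+1) = r := by
          rw [Nat.mul_add_mod, Nat.mod_eq_of_lt hrlt]
        have h2 : hdigit (m+2) (4^(m+1) * d.val + r) 0 = d := by
          apply hdigit0_eq
          rw [Nat.mul_add_div hpos, Nat.div_eq_of_lt hrlt, Nat.add_zero,
            Nat.mod_eq_of_lt d.isLt]
        rw [node_succ, h1, h2, hrn, T_ctr _ _ hi hj, hij]

/-- k ↦ node_n(k) is a bijection from {0,…,4ⁿ−1} onto the grid of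
sub-square centers {((2i+1)/2^{n+1}, (2j+1)/2^{n+1}) : 0 ≤ i,j ≤ 2ⁿ−1}. -/
theorem node_bijection_onto_centers (n : ℕ) (hn : 1 ≤ n) :
    Set.BijOn (node n) {k : ℕ | k < 4 ^ n}
      {p : E2 | ∃ i j : ℕ, i < 2 ^ n ∧ j < 2 ^ n ∧
        p = pt ((2 * (i : ℝ) + 1) / 2 ^ (n + 1)) ((2 * (j : ℝ) + 1) / 2 ^ (n + 1))} := by
  obtain ⟨m, rfl⟩ : ∃ m, n = m + 1 := ⟨n - 1, by omega⟩
  exact key m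
end
end

section
/- The n-th order Hilbert node sequence is symmetric under reflection in the vertical line x = 1/2 with reversal of the parameter: for every n ≥ 1 and 0 ≤ k < 4^n, if node_n(k) = (x, y) then node_n(4^n − 1 − k) = (1 − x, y). -/
open Matrix

noncomputable section

def cpl (i : Fin 4) : Fin 4 := ⟨3 - i.val, by omega⟩

def refl2 (p : E2) : E2 := pt (1 - p 0) (p 1)

lemma T_refl (i : Fin 4) (v : E2) : T (cpl i) (refl2 v) = refl2 (T i v) := by
  fin_cases i <;>
  · ext j
    fin_cases j <;>
      simp [T, cpl, refl2, pt, Hm, hv, toE, Matrix.mulVec, dotProduct,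
        Fin.sum_univ_two, PiLp.add_apply, PiLp.smul_apply, smul_eq_mul] <;> ring

lemma Fv_refl (i : Fin 4) : Fv (cpl i) = refl2 (Fv i) := by
  fin_cases i <;>
  · ext j
    fin_cases j <;> simp [Fv, cpl, refl2, pt] <;> norm_num

lemma nodeAux_refl (m : ℕ) (q : ℕ → Fin 4) :
    nodeAux m (fun j => cpl (q j)) = refl2 (nodeAux m q) := by
  induction m generalizing q with
  | zero => simpa [nodeAux] using Fv_refl (q 0)
  | succ m ih =>
      show T (cpl (q 0)) (nodeAux m (fun j => cpl (q (j + 1)))) = refl2 (T (q 0) (nodeAux m _))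
      rw [ih (fun j => q (j + 1))]
      exact T_refl (q 0) _

lemma digit_compl (n k j : ℕ) (hn : 1 ≤ n) (hk : k < 4 ^ n) :
    (4 ^ n - 1 - k) / 4 ^ (n - 1 - j) % 4 = 3 - k / 4 ^ (n - 1 - j) % 4 := by
  set e := n - 1 - j with he
  have hen : e < n := by omega
  have hE : 0 < 4 ^ e := Nat.pow_pos (by norm_num)
  have h1 : 4 ^ n = 4 ^ e * 4 ^ (n - e) := by rw [← pow_add]; congr 1; omega
  have h2 : 4 ^ (n - e) = 4 * 4 ^ (n - e - 1) := by
    rw [← pow_succ']; congr 1; omega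
  set a := k / 4 ^ e with hA
  set r := k % 4 ^ e with hR
  have hr : r < 4 ^ e := Nat.mod_lt _ hE
  have hk' : 4 ^ e * a + r = k := Nat.div_add_mod k (4 ^ e)
  have ha : a < 4 ^ (n - e) := by
    rw [hA]
    apply Nat.div_lt_of_lt_mul
    rw [← h1]; exact hk
  have c1 : 1 ≤ 4 ^ n := Nat.one_le_pow _ _ (by norm_num)
  have c2 : 1 ≤ 4 ^ (n - e) := Nat.one_le_pow _ _ (by norm_num)
  have c6 : 1 ≤ 4 ^ e := hE
  have c3 : k ≤ 4 ^ n - 1 := by omega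
  have c4 : a ≤ 4 ^ (n - e) - 1 := by omega
  have c5 : r ≤ 4 ^ e - 1 := by omega
  have key : 4 ^ n - 1 - k
      = 4 ^ e * (4 ^ (n - e) - 1 - a) + (4 ^ e - 1 - r) := by
    zify [c1, c2, c3, c4, c5, c6]
    have hz : ((4:ℤ) ^ e) * (a : ℤ) + (r : ℤ) = (k : ℤ) := by exact_mod_cast hk'
    have h1z : ((4:ℤ) ^ n) = 4 ^ e * 4 ^ (n - e) := by exact_mod_cast h1
    linear_combination h1z + hz
  have hdiv : (4 ^ n - 1 - k) / 4 ^ e = 4 ^ (n - e) - 1 - a := by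
    rw [key, Nat.mul_add_div hE,
      Nat.div_eq_of_lt (show 4 ^ e - 1 - r < 4 ^ e by omega), Nat.add_zero]
  rw [hdiv]
  rw [h2] at ha ⊢
  omega

lemma hdigit_compl (n k : ℕ) (hn : 1 ≤ n) (hk : k < 4 ^ n) :
    hdigit n (4 ^ n - 1 - k) = fun j => cpl (hdigit n k j) := by
  funext j
  apply Fin.ext
  have h := digit_compl n k j hn hk
  simpa [hdigit, cpl] using h

/-- the node sequence is symmetric under reflection in x = 1/2 together
with reversal of the parameter. -/
theorem node_reflection_symmetry (n : ℕ) (hn : 1 ≤ n) (k : ℕ) (hk : k < 4 ^ n)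
    (x y : ℝ) (hxy : node n k = pt x y) :
    node n (4 ^ n - 1 - k) = pt (1 - x) y := by
  have h : node n (4 ^ n - 1 - k) = refl2 (node n k) := by
    rw [node, node, hdigit_compl n k hn hk]
    exact nodeAux_refl _ _
  rw [h, hxy]
  ext j
  fin_cases j <;> simp [refl2, pt]

end
end

section
/- Displacement across an exiting corner node (core computation of Theorem 1): let n ≥ 2, q ∈ {0,1,2}, and k = (q+1)·4^{n−1} − 1 (the exiting corner node of the (q+1)-th quadrant, with base-4 digits (q,3,…,3)). Then the vector from the node preceding the corner node to the node succeeding it equals node_n(k+1) − node_n(k−1) = (1/2)·(h_{q+1} − h_q − H_q·(1,0)) + 2^{1−n}·(H_{q+1}·F_0 − H_q·v_n), where v_n = (−1/4, 3/4) if n is even and v_n = (−3/4, 1/4) if n is odd; in particular, up to the scale factor 2^{1−n}, this displacement is determined solely by q and the parity of n. -/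
open Matrix

noncomputable section

lemma nodeAux_congr : ∀ (m : ℕ) (d d' : ℕ → Fin 4),
    (∀ j ≤ m, d j = d' j) → nodeAux m d = nodeAux m d'
  | 0, d, d', h => by simp [nodeAux, h 0 le_rfl]
  | m+1, d, d', h => by
    simp only [nodeAux, h 0 (Nat.zero_le _)]
    exact congrArg _ (nodeAux_congr m _ _ (fun j hj => h (j+1) (by omega)))

lemma T_zero_smul (c : ℝ) :
    T 0 (c • (pt (1/4) (1/4) : E2)) = (c/2) • (pt (1/4) (1/4) : E2) := by
  ext i
  fin_cases i <;>
    simp [T, toE, pt, hv, Hm, Matrix.mulVec, dotProduct, Fin.sum_univ_two,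
      PiLp.add_apply, PiLp.smul_apply, smul_eq_mul] <;> ring

lemma nodeAux_zero : ∀ m : ℕ,
    nodeAux m (fun _ => 0) = (2:ℝ)^(-(m:ℤ)) • (pt (1/4) (1/4) : E2)
  | 0 => by simp [nodeAux, Fv]
  | m+1 => by
    show T 0 (nodeAux m (fun _ => 0)) = _
    rw [nodeAux_zero m, T_zero_smul]
    congr 1
    rw [show (-((m:ℕ)+1:ℕ) : ℤ) = -(m:ℤ) + (-1) by push_cast; ring,
      zpow_add₀ (two_ne_zero)]
    norm_num
    ring

lemma T_three_a (c : ℝ) :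
    T 3 ((pt 1 0 : E2) + c • pt (-(1/4)) (3/4)) = pt 1 0 + (c/2) • pt (-(3/4)) (1/4) := by
  ext i
  fin_cases i <;>
    simp [T, toE, pt, hv, Hm, Matrix.mulVec, dotProduct, Fin.sum_univ_two,
      PiLp.add_apply, PiLp.smul_apply, smul_eq_mul] <;> ring

lemma T_three_b (c : ℝ) :
    T 3 ((pt 1 0 : E2) + c • pt (-(3/4)) (1/4)) = pt 1 0 + (c/2) • pt (-(1/4)) (3/4) := by
  ext i
  fin_cases i <;>
    simp [T, toE, pt, hv, Hm, Matrix.mulVec, dotProduct, Fin.sum_univ_two,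
      PiLp.add_apply, PiLp.smul_apply, smul_eq_mul] <;> ring

lemma nodeAux_three : ∀ (m : ℕ) (d : ℕ → Fin 4), (∀ j < m, d j = 3) → d m = 2 →
    nodeAux m d = pt 1 0 + (2:ℝ)^(-(m:ℤ)) •
      (if Even m then (pt (-(1/4)) (3/4) : E2) else pt (-(3/4)) (1/4))
  | 0, d, _, h2 => by simp [nodeAux, h2, Fv, pt]; ext i; fin_cases i <;> simp [pt] <;> norm_num
  | m+1, d, h3, h2 => by
    have hstep : (2:ℝ)^(-((m:ℕ)+1:ℕ) : ℤ) = ((2:ℝ)^(-(m:ℤ)))/2 := by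
      rw [show (-((m:ℕ)+1:ℕ) : ℤ) = -(m:ℤ) + (-1) by push_cast; ring,
        zpow_add₀ (two_ne_zero)]
      norm_num
      ring

    show T (d 0) (nodeAux m (fun j => d (j+1))) = _
    rw [h3 0 (Nat.succ_pos _),
      nodeAux_three m (fun j => d (j+1)) (fun j hj => h3 (j+1) (by omega)) h2]
    rcases Nat.even_or_odd m with hm | hm
    · rw [if_pos hm, T_three_a, if_neg (by simp [Nat.even_add_one, hm]), hstep]
    · rw [if_neg (Nat.not_even_iff_odd.mpr hm), T_three_b,
        if_pos (by rw [Nat.even_add_one]; exact Nat.not_even_iff_odd.mpr hm), hstep]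



/-- displacement across the exiting corner node k = (q+1)·4^{n−1} − 1:
node_n(k+1) − node_n(k−1) = (1/2)(h_{q+1} − h_q − H_q·(1,0)) + 2^{1−n}(H_{q+1}F_0 − H_q v_n). -/
theorem displacement_across_exiting_corner (n : ℕ) (hn : 2 ≤ n) (q : Fin 4)
    (hq : (q : ℕ) ≤ 2) (k : ℕ) (hk : k = ((q : ℕ) + 1) * 4 ^ (n - 1) - 1) :
    node n (k + 1) - node n (k - 1) =
      (1/2 : ℝ) • (hv (q + 1) - hv q - toE ((Hm q).mulVec ![1, 0])) +
      (2:ℝ) ^ ((1:ℤ) - n) • (toE ((Hm (q + 1)).mulVec (Fv 0)) -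
        toE ((Hm q).mulVec (if Even n then ![-(1/4), 3/4] else ![-(3/4), 1/4]))) := by
  obtain ⟨m, rfl⟩ : ∃ m, n = m + 2 := ⟨n - 2, by omega⟩
  clear hn
  set P : ℕ := 4 ^ (m + 1) with hP
  have hP4 : 4 ≤ P := by
    calc (4:ℕ) = 4 ^ 1 := rfl
    _ ≤ 4 ^ (m+1) := Nat.pow_le_pow_right (by norm_num) (by omega)
  have hKdef : k = ((q:ℕ)+1) * P - 1 := by simpa using hk
  have hPle : P ≤ ((q:ℕ)+1) * P := Nat.le_mul_of_pos_left _ (by omega)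
  have hk1 : k + 1 = ((q:ℕ)+1) * P := by omega
  have hk2 : k - 1 = ((q:ℕ)+1) * P - 2 := by omega
  have hdval : ∀ x j, (hdigit (m+2) x j : ℕ) = x / 4 ^ (m+1-j) % 4 := fun _ _ => rfl
  -- digits of k+1
  have d1_0 : hdigit (m+2) (k+1) 0 = q + 1 := by
    apply Fin.ext
    rw [hdval, hk1]
    have h1 : m + 1 - 0 = m + 1 := by omega
    rw [h1, ← hP, Nat.mul_div_cancel _ (by omega : 0 < P)]
    rw [Fin.val_add]
    have : ((1 : Fin 4) : ℕ) = 1 := rfl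
    omega
  have d1_s : ∀ j ≤ m, hdigit (m+2) (k+1) (j+1) = 0 := by
    intro j hj
    apply Fin.ext
    rw [hdval, hk1]
    have h1 : m + 1 - (j+1) = m - j := by omega
    rw [h1, hP, Nat.mul_div_assoc _ (pow_dvd_pow 4 (by omega : m - j ≤ m + 1)),
      Nat.pow_div (by omega) (by norm_num), show m + 1 - (m - j) = j + 1 by omega,
      pow_succ, ← mul_assoc, Nat.mul_mod_left]
    rfl
  -- digits of k-1
  have d2_0 : hdigit (m+2) (k-1) 0 = q := by
    apply Fin.ext
    rw [hdval, hk2]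
    have h1 : m + 1 - 0 = m + 1 := by omega
    have key : ((q:ℕ)+1) * P - 2 = P * (q:ℕ) + (P - 2) := by
      have h2 : ((q:ℕ)+1) * P = P * (q:ℕ) + P := by ring
      omega
    rw [h1, ← hP, key, Nat.mul_add_div (by omega : 0 < P), Nat.div_eq_of_lt (by omega)]
    omega
  have d2_s : ∀ j < m, hdigit (m+2) (k-1) (j+1) = 3 := by
    intro j hj
    apply Fin.ext
    rw [hdval, hk2]
    have h1 : m + 1 - (j+1) = m - j := by omega
    set A : ℕ := ((q:ℕ)+1) * 4 ^ (j+1) with hA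
    set Y : ℕ := 4 ^ (m - j) with hY
    have hY4 : 4 ≤ Y := by
      calc (4:ℕ) = 4 ^ 1 := rfl
      _ ≤ 4 ^ (m - j) := Nat.pow_le_pow_right (by norm_num) (by omega)
    have hA1 : 4 ≤ A := by
      calc (4:ℕ) = 1 * 4 ^ 1 := by norm_num
      _ ≤ ((q:ℕ)+1) * 4 ^ (j+1) :=
        Nat.mul_le_mul (by omega) (Nat.pow_le_pow_right (by norm_num) (by omega))
    have hAY : ((q:ℕ)+1) * P = A * Y := by
      rw [hA, hY, hP, mul_assoc, ← pow_add, show (j+1) + (m-j) = m + 1 by omega]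
    have hYAY : Y ≤ A * Y := Nat.le_mul_of_pos_left _ (by omega)
    have key : A * Y - 2 = (Y - 2) + (A - 1) * Y := by
      rw [Nat.sub_one_mul]; omega
    rw [h1, ← hY, hAY, key, Nat.add_mul_div_right _ _ (by omega : 0 < Y),
      Nat.div_eq_of_lt (by omega), zero_add]
    obtain ⟨B, hB⟩ : ∃ B, A = 4 * B := ⟨((q:ℕ)+1) * 4 ^ j, by rw [hA, pow_succ]; ring⟩
    have hB1 : 1 ≤ B := by omega
    rw [hB]
    have : (4 * B - 1) % 4 = 3 := by omega
    rw [this]; rfl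
  have d2_last : hdigit (m+2) (k-1) (m+1) = 2 := by
    apply Fin.ext
    rw [hdval, hk2]
    have h1 : m + 1 - (m+1) = 0 := by omega
    rw [h1, pow_zero, Nat.div_one]
    obtain ⟨B, hB⟩ : ∃ B, ((q:ℕ)+1) * P = 4 * B :=
      ⟨((q:ℕ)+1) * 4 ^ m, by rw [hP, pow_succ]; ring⟩
    have hB1 : 1 ≤ B := by omega
    rw [hB]
    have : (4 * B - 2) % 4 = 2 := by omega
    rw [this]; rfl
  -- assemble the two nodes
  have e1 : node (m+2) (k+1) = T (q+1) ((2:ℝ)^(-(m:ℤ)) • pt (1/4) (1/4)) := by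
    show T (hdigit (m+2) (k+1) 0)
        (nodeAux m fun j => hdigit (m+2) (k+1) (j+1)) = _
    rw [d1_0, nodeAux_congr m _ (fun _ => (0:Fin 4)) (fun j hj => d1_s j hj), nodeAux_zero]
  have e2 : node (m+2) (k-1) = T q ((pt 1 0 : E2) + (2:ℝ)^(-(m:ℤ)) •
      (if Even m then (pt (-(1/4)) (3/4) : E2) else pt (-(3/4)) (1/4))) := by
    show T (hdigit (m+2) (k-1) 0)
        (nodeAux m fun j => hdigit (m+2) (k-1) (j+1)) = _
    rw [d2_0, nodeAux_three m _ (fun j hj => d2_s j hj) d2_last]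
  rw [e1, e2]
  have hpow : (2:ℝ) ^ ((1:ℤ) - ((m+2:ℕ):ℤ)) = (2:ℝ)^(-(m:ℤ)) * (1/2) := by
    rw [show (1:ℤ) - ((m+2:ℕ):ℤ) = -(m:ℤ) + (-1) by push_cast; ring,
      zpow_add₀ (two_ne_zero)]
    norm_num
  rw [hpow]
  have hEv : Even (m+2) ↔ Even m := by simp [Nat.even_add]
  rcases Nat.even_or_odd m with hm | hm <;>
    [rw [if_pos hm, if_pos (hEv.mpr hm)];
     rw [if_neg (Nat.not_even_iff_odd.mpr hm), if_neg (fun h => (Nat.not_even_iff_odd.mpr hm) (hEv.mp h))]] <;>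
  fin_cases q <;> first
  | exact absurd hq (by decide)
  | (ext i; fin_cases i <;>
      simp [T, toE, pt, hv, Hm, Fv, Matrix.mulVec, dotProduct, Fin.sum_univ_two,
        PiLp.add_apply, PiLp.sub_apply, PiLp.smul_apply, smul_eq_mul,
        Matrix.cons_val_zero, Matrix.cons_val_one, Matrix.head_cons] <;> ring)

end
end

section
/- A blocked non-corner node can be skipped by a single diagonal move: for every n ≥ 1 and every integer k with 1 ≤ k ≤ 4^n − 2 whose last base-4 digit is 1 or 2 (i.e. k mod 4 ∈ {1,2}), the Euclidean distance between the node preceding and the node succeeding node_n(k) satisfies ‖node_n(k+1) − node_n(k−1)‖ = √2 · 2^{−n} (equivalently, the sup-norm distance is 2^{−n}, so the two corresponding sub-squares touch). -/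
open Matrix

noncomputable section

lemma T_sub (i : Fin 4) (u v : E2) :
    T i u - T i v = (1 / 2 : ℝ) • toE ((Hm i).mulVec (u - v)) := by
  simp only [T, toE]
  rw [add_sub_add_right_eq_sub, ← smul_sub, ← WithLp.toLp_sub, ← Matrix.mulVec_sub]

lemma nodeAux_diff (m : ℕ) (q q' : ℕ → Fin 4) (hq : ∀ j < m, q j = q' j)
    (hlast : (q m = 2 ∧ q' m = 0) ∨ (q m = 3 ∧ q' m = 1)) :
    ∃ e1 e2 : ℝ, (e1 = 1 ∨ e1 = -1) ∧ (e2 = 1 ∨ e2 = -1) ∧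
      nodeAux m q - nodeAux m q' = ![e1 * (1/2)^(m+1), e2 * (1/2)^(m+1)] := by
  induction m generalizing q q' with
  | zero =>
    rcases hlast with ⟨h, h'⟩ | ⟨h, h'⟩
    · refine ⟨1, 1, Or.inl rfl, Or.inl rfl, ?_⟩
      simp only [nodeAux, h, h']
      funext i
      fin_cases i <;> simp [Fv, pt] <;> norm_num
    · refine ⟨1, -1, Or.inl rfl, Or.inr rfl, ?_⟩
      simp only [nodeAux, h, h']
      funext i
      fin_cases i <;> simp [Fv, pt] <;> norm_num
  | succ m ih =>
    have h0 : q 0 = q' 0 := hq 0 (Nat.succ_pos m)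
    obtain ⟨e1, e2, he1, he2, hd⟩ := ih (fun j => q (j + 1)) (fun j => q' (j + 1))
      (fun j hj => hq (j + 1) (by omega)) (by simpa using hlast)
    have key : nodeAux (m+1) q - nodeAux (m+1) q'
        = (1 / 2 : ℝ) • toE ((Hm (q' 0)).mulVec ![e1 * (1/2)^(m+1), e2 * (1/2)^(m+1)]) := by
      show T (q 0) _ - T (q' 0) _ = _
      rw [h0, T_sub, hd]
    have hsq : ∀ i : Fin 4, ∃ f1 f2 : ℝ, (f1 = 1 ∨ f1 = -1) ∧ (f2 = 1 ∨ f2 = -1) ∧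
        (1 / 2 : ℝ) • toE ((Hm i).mulVec ![e1 * (1/2)^(m+1), e2 * (1/2)^(m+1)])
          = ![f1 * (1/2)^(m+2), f2 * (1/2)^(m+2)] := by
      intro i
      fin_cases i
      · exact ⟨e2, e1, he2, he1, by
          funext j; fin_cases j <;>
            simp [Hm, toE, Matrix.mulVec, dotProduct, Fin.sum_univ_two] <;> ring⟩
      · exact ⟨e1, e2, he1, he2, by
          funext j; fin_cases j <;>
            simp [Hm, toE, Matrix.mulVec, dotProduct, Fin.sum_univ_two] <;> ring⟩
      · exact ⟨e1, e2, he1, he2, by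
          funext j; fin_cases j <;>
            simp [Hm, toE, Matrix.mulVec, dotProduct, Fin.sum_univ_two] <;> ring⟩
      · refine ⟨-e2, -e1, ?_, ?_, ?_⟩
        · rcases he2 with h | h <;> simp [h]
        · rcases he1 with h | h <;> simp [h]
        · funext j; fin_cases j <;>
            simp [Hm, toE, Matrix.mulVec, dotProduct, Fin.sum_univ_two] <;> ring
    obtain ⟨f1, f2, hf1, hf2, hf⟩ := hsq (q' 0)
    exact ⟨f1, f2, hf1, hf2, by rw [← hf, ← WithLp.ofLp_sub, key]; rfl⟩

lemma digit_agree (n k j : ℕ) (h1 : 1 ≤ k) (hmod : k % 4 = 1 ∨ k % 4 = 2)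
    (hj : j < n - 1) :
    hdigit n (k + 1) j = hdigit n (k - 1) j := by
  set r := k % 4 with hr
  set t := k / 4 with ht
  have hk : k = 4 * t + r := (Nat.div_add_mod k 4).symm.trans (by ring)
  have hs : 1 ≤ n - 1 - j := by omega
  have key : ∀ a, a < 4 → (4 * t + a) / 4 ^ (n - 1 - j) = t / 4 ^ (n - 1 - j - 1) := by
    intro a ha
    have h4 : (4 : ℕ) ^ (n - 1 - j) = 4 * 4 ^ (n - 1 - j - 1) := by
      rw [← pow_succ']
      congr 1
      omega
    rw [h4, ← Nat.div_div_eq_div_mul]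
    congr 1
    omega
  have hkp : k + 1 = 4 * t + (r + 1) := by omega
  have hkm : k - 1 = 4 * t + (r - 1) := by omega
  unfold hdigit
  ext
  simp only
  rw [hkp, hkm, key _ (by omega), key _ (by omega)]

lemma digit_last (n k : ℕ) (hn : 1 ≤ n) : hdigit n k (n - 1) = ⟨k % 4, Nat.mod_lt _ (by norm_num)⟩ := by
  unfold hdigit
  ext
  simp only
  rw [Nat.sub_self, pow_zero, Nat.div_one]

/-- a blocked non-corner node (last base-4 digit 1 or 2) can be skipped
diagonally: the nodes before and after it are at Euclidean distance √2·2^{−n}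
(equivalently, sup-norm distance 2^{−n}). -/
theorem skip_noncorner_node (n : ℕ) (hn : 1 ≤ n) (k : ℕ) (h1 : 1 ≤ k)
    (h2 : k ≤ 4 ^ n - 2) (hmod : k % 4 = 1 ∨ k % 4 = 2) :
    ‖node n (k + 1) - node n (k - 1)‖ = Real.sqrt 2 * ((1:ℝ) / 2 ^ n) ∧
    ‖(fun i : Fin 2 => node n (k + 1) i - node n (k - 1) i : Fin 2 → ℝ)‖ =
      (1:ℝ) / 2 ^ n := by
  have hlast : (hdigit n (k+1) (n-1) = 2 ∧ hdigit n (k-1) (n-1) = 0) ∨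
      (hdigit n (k+1) (n-1) = 3 ∧ hdigit n (k-1) (n-1) = 1) := by
    rw [digit_last n _ hn, digit_last n _ hn]
    rcases hmod with h | h
    · left
      constructor <;> · ext; simp; omega
    · right
      constructor <;> · ext; simp; omega
  obtain ⟨e1, e2, he1, he2, hd⟩ := nodeAux_diff (n - 1) (hdigit n (k+1)) (hdigit n (k-1))
    (fun j hj => digit_agree n k j h1 hmod hj) hlast
  have hne : n - 1 + 1 = n := by omega
  rw [hne] at hd
  have hc : (0:ℝ) < (1/2:ℝ)^n := by positivity
  have hdiff : node n (k+1) - node n (k-1) = ![e1 * (1/2)^n, e2 * (1/2)^n] := hd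
  have he1sq : e1^2 = 1 := by rcases he1 with h | h <;> rw [h] <;> ring
  have he2sq : e2^2 = 1 := by rcases he2 with h | h <;> rw [h] <;> ring
  have habs1 : |e1| = 1 := by rcases he1 with h | h <;> rw [h] <;> norm_num
  have habs2 : |e2| = 1 := by rcases he2 with h | h <;> rw [h] <;> norm_num
  have hpow : ((1:ℝ)/2)^n = 1/2^n := by rw [div_pow, one_pow]
  constructor
  · rw [EuclideanSpace.norm_eq, WithLp.ofLp_sub, hdiff]
    rw [Fin.sum_univ_two]
    have : ‖(![e1 * (1/2)^n, e2 * (1/2)^n] : Fin 2 → ℝ) 0‖^2 +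
        ‖(![e1 * (1/2)^n, e2 * (1/2)^n] : Fin 2 → ℝ) 1‖^2 = 2 * ((1/2:ℝ)^n)^2 := by
      simp only [Matrix.cons_val_zero, Matrix.cons_val_one, Matrix.head_cons, Real.norm_eq_abs,
        sq_abs]
      nlinarith [he1sq, he2sq]
    rw [this, Real.sqrt_mul (by norm_num), Real.sqrt_sq hc.le, hpow]
  · have hfun : (fun i : Fin 2 => node n (k + 1) i - node n (k - 1) i : Fin 2 → ℝ)
        = ![e1 * (1/2)^n, e2 * (1/2)^n] := by
      funext i
      exact congrFun hdiff i
    rw [hfun]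
    apply le_antisymm
    · apply pi_norm_le_iff_of_nonneg (by positivity) |>.mpr
      intro i
      fin_cases i <;>
        simp [Real.norm_eq_abs, abs_mul, habs1, habs2, hpow, abs_of_pos, hc, le_of_eq,
          abs_of_nonneg hc.le]
    · calc (1:ℝ)/2^n = ‖(![e1 * (1/2)^n, e2 * (1/2)^n] : Fin 2 → ℝ) 0‖ := by
            simp [Real.norm_eq_abs, abs_mul, habs1, abs_of_nonneg hc.le, hpow]
          _ ≤ _ := norm_le_pi_norm _ 0

end
end
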